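/- arXiv:1303.4966 — 11 statements merged into one kernel-verified Lean document; each statement's English description precedes it below -/
import Mathlib

section
/- Let U and V be finite abelian groups with exp(U) = exp(V). Then Hom(U, V) is isomorphic to U if and only if V is cyclic. -/
/-- A finite cyclic group has enough roots of unity of order its cardinality. -/
lemma aux_hasEnoughRootsOfUnity (W : Type*) [CommGroup W] [Finite W] [IsCyclic W] :
    HasEnoughRootsOfUnity W (Nat.card W) where
  prim := by
    obtain ⟨g, hg⟩ := IsCyclic.exists_generator (α := W)
    exact ⟨g, (orderOf_eq_card_of_forall_mem_zpowers hg) ▸ IsPrimitiveRoot.orderOf g⟩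
  cyc := by
    have : IsCyclic Wˣ := isCyclic_of_surjective (toUnits (G := W)) (toUnits (G := W)).surjective
    exact Subgroup.isCyclic _

/-- The dual of `U` with values in a cyclic group of order `exp U` is isomorphic to `U`. -/
lemma aux_hom_equiv_of_cyclic (U W : Type*) [CommGroup U] [Finite U] [CommGroup W] [Finite W]
    [IsCyclic W] (h : Monoid.exponent U = Nat.card W) :
    Nonempty ((U →* W) ≃* U) := by
  have : HasEnoughRootsOfUnity W (Monoid.exponent U) := by
    rw [h]; exact aux_hasEnoughRootsOfUnity W
  obtain ⟨E⟩ := CommGroup.monoidHom_mulEquiv_of_hasEnoughRootsOfUnity U W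
  exact ⟨((toUnits (G := W)).monoidHomCongrRight (M := U)).trans E⟩

/-- For finite abelian groups `U`, `V` with `exp U = exp V`,
`Hom(U, V) ≅ U` if and only if `V` is cyclic. -/
theorem hom_iso_self_iff_isCyclic (U V : Type*) [CommGroup U] [CommGroup V]
    [Finite U] [Finite V] (hexp : Monoid.exponent U = Monoid.exponent V) :
    Nonempty ((U →* V) ≃* U) ↔ IsCyclic V := by
  constructor
  · rintro ⟨e⟩
    have hne : Monoid.exponent U ≠ 0 := Monoid.ExponentExists.of_finite.exponent_ne_zero
    have : NeZero (Monoid.exponent U) := ⟨hne⟩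
    obtain ⟨g, hg⟩ := Monoid.exists_orderOf_eq_exponent (Monoid.ExponentExists.of_finite (G := V))
    have hCcyc : IsCyclic (Subgroup.zpowers g) := by
      refine ⟨⟨⟨g, Subgroup.mem_zpowers g⟩, ?_⟩⟩
      rintro ⟨x, hx⟩
      obtain ⟨k, rfl⟩ := Subgroup.mem_zpowers_iff.mp hx
      exact Subgroup.mem_zpowers_iff.mpr ⟨k, by ext; simp⟩
    have hcardC : Nat.card (Subgroup.zpowers g) = Monoid.exponent U := by
      rw [Nat.card_zpowers, hg, ← hexp]
    obtain ⟨E⟩ := aux_hom_equiv_of_cyclic U (Subgroup.zpowers g) hcardC.symm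
    let F : (U →* Subgroup.zpowers g) → (U →* V) := fun φ => (Subgroup.zpowers g).subtype.comp φ
    have hFinj : Function.Injective F := by
      intro φ ψ h
      ext u
      exact DFunLike.congr_fun h u
    have inst1 : Finite (U →* V) := Finite.of_equiv U e.symm.toEquiv
    have inst2 : Finite (U →* Subgroup.zpowers g) := Finite.of_equiv U E.symm.toEquiv
    have hFsurj : Function.Surjective F := by
      have hcards : Nat.card (U →* Subgroup.zpowers g) = Nat.card (U →* V) := by
        rw [Nat.card_congr E.toEquiv, Nat.card_congr e.toEquiv]
      exact ((Nat.bijective_iff_injective_and_card F).mpr ⟨hFinj, hcards⟩).2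
    -- a surjective character χ : U →* Multiplicative (ZMod (exp U))
    have hcardZ : Nat.card (Multiplicative (ZMod (Monoid.exponent U))) = Monoid.exponent U := by
      simp [Nat.card_eq_fintype_card, ZMod.card]
    obtain ⟨E'⟩ := aux_hom_equiv_of_cyclic U (Multiplicative (ZMod (Monoid.exponent U)))
      hcardZ.symm
    have inst3 : Finite (U →* Multiplicative (ZMod (Monoid.exponent U))) :=
      Finite.of_equiv U E'.symm.toEquiv
    have hexpD : Monoid.exponent (U →* Multiplicative (ZMod (Monoid.exponent U)))
        = Monoid.exponent U := Monoid.exponent_eq_of_mulEquiv E'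
    obtain ⟨χ, hχ⟩ := Monoid.exists_orderOf_eq_exponent
      (Monoid.ExponentExists.of_finite (G := U →* Multiplicative (ZMod (Monoid.exponent U))))
    rw [hexpD] at hχ
    have hχsurj : Function.Surjective χ := by
      rw [← MonoidHom.range_eq_top]
      have hdvd1 : orderOf χ ∣ Nat.card χ.range := by
        apply orderOf_dvd_of_pow_eq_one
        ext u
        have : (⟨χ u, ⟨u, rfl⟩⟩ : χ.range) ^ (Nat.card χ.range) = 1 := pow_card_eq_one'
        have h2 : χ u ^ Nat.card χ.range = 1 := by simpa [Subtype.ext_iff] using this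
        simp only [MonoidHom.pow_apply, MonoidHom.one_apply, h2]
      rw [hχ] at hdvd1
      have hdvd2 := Subgroup.card_subgroup_dvd_card χ.range
      rw [hcardZ] at hdvd2
      apply Subgroup.eq_top_of_card_eq
      rw [hcardZ]
      exact Nat.dvd_antisymm hdvd2 hdvd1
    -- show every element of V lies in the subgroup generated by g
    refine ⟨⟨g, fun v => ?_⟩⟩
    have hv : ((Monoid.exponent U : ℤ)) • (Additive.ofMul v) = 0 := by
      have : v ^ (Monoid.exponent U) = 1 := by
        rw [hexp]; exact Monoid.pow_exponent_eq_one v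
      simpa [← ofMul_pow] using congrArg Additive.ofMul this
    let f0 : ZMod (Monoid.exponent U) →+ Additive V :=
      ZMod.lift (Monoid.exponent U) ⟨(zmultiplesHom (Additive V)) (Additive.ofMul v), hv⟩
    let f : Multiplicative (ZMod (Monoid.exponent U)) →* V :=
      (MulEquiv.multiplicativeAdditive V).toMonoidHom.comp (AddMonoidHom.toMultiplicative f0)
    have hf1 : f (Multiplicative.ofAdd 1) = v := by
      have h0 : f0 1 = Additive.ofMul v := by
        have h1 : ((1 : ℤ) : ZMod (Monoid.exponent U)) = (1 : ZMod (Monoid.exponent U)) := by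
          push_cast; ring
        rw [← h1, ZMod.lift_coe]
        simp
      simp [f, h0]
    obtain ⟨u₀, hu₀⟩ := hχsurj (Multiplicative.ofAdd 1)
    obtain ⟨φ, hφ⟩ := hFsurj (f.comp χ)
    have hmem : (f.comp χ) u₀ ∈ Subgroup.zpowers g := by
      rw [← hφ]
      exact (φ u₀).2
    rw [MonoidHom.comp_apply, hu₀, hf1] at hmem
    exact hmem
  · intro hV
    exact aux_hom_equiv_of_cyclic U V (by rw [hexp, IsCyclic.exponent_eq_card])
end

section
/- Let G be any group, let Y be a central subgroup of G, and let X be a normal subgroup of G containing Y. Then the group of all automorphisms of G that restrict to the identity on X and induce the identity map on G/Y is isomorphic to Hom(G/X, Y). -/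
/-- A subgroup contained in the center is a commutative group. -/
@[reducible]
def centralCommGroup {G : Type*} [Group G] {H : Subgroup G}
    (h : H ≤ Subgroup.center G) : CommGroup H :=
  { (inferInstance : Group H) with
    mul_comm := fun a b => Subtype.ext (by
      simpa using ((Subgroup.mem_center_iff.mp (h a.2)) (b : G)).symm) }

namespace AutFixAux

variable {G : Type*} [Group G] (X Y : Subgroup G) [X.Normal]

/-- The subgroup of automorphisms fixing `X` pointwise and inducing identity mod `Y`. -/
def S (hYX : Y ≤ X) : Subgroup (MulAut G) where
  carrier := {α | (∀ x ∈ X, α x = x) ∧ ∀ g : G, g⁻¹ * α g ∈ Y}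
  one_mem' := ⟨fun _ _ => rfl, fun g => by simpa using Y.one_mem⟩
  mul_mem' := by
    rintro a b ⟨ha1, ha2⟩ ⟨hb1, hb2⟩
    refine ⟨fun x hx => ?_, fun g => ?_⟩
    · show a (b x) = x
      rw [hb1 x hx, ha1 x hx]
    · have : g⁻¹ * a (b g) = (g⁻¹ * b g) * ((b g)⁻¹ * a (b g)) := by group
      rw [show ((a * b) g) = a (b g) from rfl, this]
      exact Y.mul_mem (hb2 g) (ha2 (b g))
  inv_mem' := by
    rintro a ⟨ha1, ha2⟩
    refine ⟨fun x hx => ?_, fun g => ?_⟩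
    · apply a.injective
      have hx' : a (a⁻¹ x) = x := by
        rw [MulAut.inv_def]; exact a.apply_symm_apply x
      rw [hx', ha1 x hx]
    · have h := Y.inv_mem (ha2 (a⁻¹ g))
      have hg : a (a⁻¹ g) = g := by
        rw [MulAut.inv_def]; exact a.apply_symm_apply g
      simpa [mul_inv_rev, hg] using h

/-- The homomorphism `G →* Y` attached to an automorphism in `S`. -/
def f0 (hY : Y ≤ Subgroup.center G) (α : MulAut G) (h : ∀ g : G, g⁻¹ * α g ∈ Y) :
    G →* Y where
  toFun g := ⟨g⁻¹ * α g, h g⟩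
  map_one' := by ext; simp
  map_mul' a b := by
    ext
    show (a * b)⁻¹ * α (a * b) = (a⁻¹ * α a) * (b⁻¹ * α b)
    have hc : b⁻¹ * (a⁻¹ * α a) = (a⁻¹ * α a) * b⁻¹ :=
      Subgroup.mem_center_iff.mp (hY (h a)) b⁻¹
    have h1 : (a * b)⁻¹ * α (a * b) = b⁻¹ * ((a⁻¹ * α a) * α b) := by
      rw [map_mul]; group
    rw [h1, ← mul_assoc, hc, mul_assoc]

/-- The automorphism attached to a homomorphism `G ⧸ X →* Y`. -/
def toAut (hY : Y ≤ Subgroup.center G) (hYX : Y ≤ X) (f : (G ⧸ X) →* Y) : MulAut G where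
  toFun g := g * (f (QuotientGroup.mk g) : G)
  invFun g := g * ((f (QuotientGroup.mk g) : G))⁻¹
  left_inv g := by
    have hmk : (QuotientGroup.mk (g * (f (QuotientGroup.mk g) : G)) : G ⧸ X)
        = QuotientGroup.mk g := by
      rw [QuotientGroup.mk_mul, (QuotientGroup.eq_one_iff _).mpr
        (hYX (f (QuotientGroup.mk g)).2), mul_one]
    simp [hmk]
  right_inv g := by
    have hmk : (QuotientGroup.mk (g * ((f (QuotientGroup.mk g) : G))⁻¹) : G ⧸ X)
        = QuotientGroup.mk g := by
      rw [QuotientGroup.mk_mul, QuotientGroup.mk_inv, (QuotientGroup.eq_one_iff _).mpr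
        (hYX (f (QuotientGroup.mk g)).2), inv_one, mul_one]
    simp [hmk]
  map_mul' a b := by
    show (a * b) * (f (QuotientGroup.mk (a * b)) : G)
        = (a * (f (QuotientGroup.mk a) : G)) * (b * (f (QuotientGroup.mk b) : G))
    have hc : b * (f (QuotientGroup.mk a) : G) = (f (QuotientGroup.mk a) : G) * b :=
      Subgroup.mem_center_iff.mp (hY (f (QuotientGroup.mk a)).2) b
    rw [QuotientGroup.mk_mul, map_mul]
    push_cast
    rw [show a * b * ((f (QuotientGroup.mk a) : G) * (f (QuotientGroup.mk b) : G))
        = a * ((b * (f (QuotientGroup.mk a) : G)) * (f (QuotientGroup.mk b) : G)) by group,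
      hc]
    group

theorem toAut_mem (hY : Y ≤ Subgroup.center G) (hYX : Y ≤ X) (f : (G ⧸ X) →* Y) : toAut X Y hY hYX f ∈ S X Y hYX := by
  constructor
  · intro x hx
    show x * (f (QuotientGroup.mk x) : G) = x
    rw [(QuotientGroup.eq_one_iff x).mpr hx, map_one]
    simp
  · intro g
    show g⁻¹ * (g * (f (QuotientGroup.mk g) : G)) ∈ Y
    rw [← mul_assoc, inv_mul_cancel, one_mul]
    exact (f (QuotientGroup.mk g)).2

end AutFixAux

/-- The automorphisms of `G` restricting to the identity on a normal subgroup `X` and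
inducing the identity on `G/Y`, for `Y` a central subgroup contained in `X`, form a
subgroup of `Aut G` isomorphic to `Hom(G/X, Y)`. -/
theorem aut_fixing_X_inducing_id_modY_iso_hom (G : Type*) [Group G]
    (X Y : Subgroup G) [X.Normal] (hY : Y ≤ Subgroup.center G) (hYX : Y ≤ X) :
    letI : CommGroup Y := centralCommGroup hY
    ∃ S : Subgroup (MulAut G),
      (∀ α : MulAut G, α ∈ S ↔ (∀ x ∈ X, α x = x) ∧ ∀ g : G, g⁻¹ * α g ∈ Y) ∧
      Nonempty (S ≃* ((G ⧸ X) →* Y)) := by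
  letI : CommGroup Y := centralCommGroup hY
  refine ⟨AutFixAux.S X Y hYX, fun α => Iff.rfl, ⟨?_⟩⟩
  -- the forward map : S → Hom(G/X, Y)
  have lift_ok : ∀ (α : MulAut G) (hα : α ∈ AutFixAux.S X Y hYX),
      ∀ x ∈ X, AutFixAux.f0 Y hY α hα.2 x = 1 := by
    intro α hα x hx
    ext
    show x⁻¹ * α x = 1
    rw [hα.1 x hx, inv_mul_cancel]
  refine
    { toFun := fun α => QuotientGroup.lift X (AutFixAux.f0 Y hY α.1 α.2.2)
        (lift_ok α.1 α.2)
      invFun := fun f => ⟨AutFixAux.toAut X Y hY hYX f, AutFixAux.toAut_mem X Y hY hYX f⟩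
      left_inv := ?_
      right_inv := ?_
      map_mul' := ?_ }
  · rintro ⟨α, hα⟩
    ext g
    show g * (g⁻¹ * α g) = α g
    group
  · intro f
    ext g
    show g⁻¹ * (g * (f (QuotientGroup.mk g) : G)) = (f (QuotientGroup.mk g) : G)
    group
  · rintro ⟨α, hα⟩ ⟨β, hβ⟩
    ext g
    show g⁻¹ * (α (β g)) = (g⁻¹ * α g) * (g⁻¹ * β g)
    have hy : β g = g * (g⁻¹ * β g) := by group
    calc g⁻¹ * α (β g) = g⁻¹ * α (g * (g⁻¹ * β g)) := by rw [← hy]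
      _ = g⁻¹ * (α g * (g⁻¹ * β g)) := by
          rw [map_mul, hα.1 _ (hYX (hβ.2 g))]
      _ = (g⁻¹ * α g) * (g⁻¹ * β g) := by group
end

section
/- Let G be a nilpotent group of class at most 2 (i.e., G' ⊆ Z(G)). Then IA(G)*, the group of IA-automorphisms of G that fix the center Z(G) elementwise, is isomorphic to Hom(G/Z(G), G'). -/
/-- The group of IA-automorphisms of `G` fixing the center elementwise. -/
def IAstar (G : Type*) [Group G] : Subgroup (MulAut G) where
  carrier := {α | (∀ g : G, g⁻¹ * α g ∈ commutator G) ∧ ∀ z ∈ Subgroup.center G, α z = z}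
  one_mem' := by
    constructor
    · intro g; simp
    · intro z _; rfl
  mul_mem' := by
    rintro α β ⟨hα, hα'⟩ ⟨hβ, hβ'⟩
    constructor
    · intro g
      have h : g⁻¹ * (α * β) g = (g⁻¹ * β g) * ((β g)⁻¹ * α (β g)) := by
        simp [MulAut.mul_apply, mul_assoc]
      rw [h]
      exact mul_mem (hβ g) (hα (β g))
    · intro z hz
      simp [MulAut.mul_apply, hβ' z hz, hα' z hz]
  inv_mem' := by
    rintro α ⟨hα, hα'⟩
    constructor
    · intro g
      have h := hα (α⁻¹ g)
      rw [MulAut.apply_inv_self] at h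
      simpa using inv_mem h
    · intro z hz
      have h := congrArg (fun x => α⁻¹ x) (hα' z hz)
      simp only [MulAut.inv_apply_self] at h
      exact h.symm

/-- For a nilpotent group `G` of class at most 2, `IA(G)* ≅ Hom(G/Z(G), G')`. -/
theorem IAstar_iso_hom_central_quotient_commutator (G : Type*) [Group G]
    (h2 : commutator G ≤ Subgroup.center G) :
    letI : CommGroup (commutator G) := centralCommGroup h2
    Nonempty (IAstar G ≃* ((G ⧸ Subgroup.center G) →* commutator G)) := by
  letI : CommGroup (commutator G) := centralCommGroup h2
  have hcentral : ∀ x : G, x ∈ commutator G → ∀ g : G, g * x = x * g :=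
    fun x hx g => Subgroup.mem_center_iff.mp (h2 hx) g
  have hmk : ∀ (c : G), c ∈ commutator G →
      ((c : G ⧸ Subgroup.center G)) = 1 := fun c hc =>
    (QuotientGroup.eq_one_iff _).mpr (h2 hc)
  let Φ : IAstar G → ((G ⧸ Subgroup.center G) →* commutator G) := fun α =>
    QuotientGroup.lift (Subgroup.center G)
      { toFun := fun g => (⟨g⁻¹ * α.1 g, α.2.1 g⟩ : commutator G)
        map_one' := Subtype.ext (by simp)
        map_mul' := fun g h => Subtype.ext (by
          have hc := hcentral _ (α.2.1 g) h⁻¹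
          show (g*h)⁻¹ * α.1 (g*h) = (g⁻¹ * α.1 g) * (h⁻¹ * α.1 h)
          rw [map_mul, mul_inv_rev]
          calc h⁻¹ * g⁻¹ * (α.1 g * α.1 h)
              = h⁻¹ * (g⁻¹ * α.1 g) * α.1 h := by group
            _ = (g⁻¹ * α.1 g) * h⁻¹ * α.1 h := by rw [hc]
            _ = (g⁻¹ * α.1 g) * (h⁻¹ * α.1 h) := by group) }
      (fun z hz => Subtype.ext (by simp [α.2.2 z hz]))
  let Ψ : ((G ⧸ Subgroup.center G) →* commutator G) → IAstar G := fun f =>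
    ⟨{ toFun := fun g => g * (f (g : G ⧸ Subgroup.center G) : G)
       invFun := fun g => g * ((f (g : G ⧸ Subgroup.center G) : G))⁻¹
       left_inv := fun g => by
         have : ((g * (f (g : G ⧸ Subgroup.center G) : G) : G) : G ⧸ Subgroup.center G)
             = (g : G ⧸ Subgroup.center G) := by
           rw [QuotientGroup.mk_mul, hmk _ (f _).2, mul_one]
         simp only [this]
         group
       right_inv := fun g => by
         have : ((g * ((f (g : G ⧸ Subgroup.center G) : G))⁻¹ : G) : G ⧸ Subgroup.center G)
             = (g : G ⧸ Subgroup.center G) := by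
           rw [QuotientGroup.mk_mul, QuotientGroup.mk_inv, hmk _ (f _).2, inv_one, mul_one]
         simp only [this]
         group
       map_mul' := fun g h => by
         simp only [QuotientGroup.mk_mul, map_mul]
         have hc := hcentral _ (f (g : G ⧸ Subgroup.center G)).2 h
         push_cast
         calc g * h * ((f (g : G ⧸ Subgroup.center G) : G) * (f (h : G ⧸ Subgroup.center G) : G))
             = g * (h * (f (g : G ⧸ Subgroup.center G) : G)) * (f (h : G ⧸ Subgroup.center G) : G) := by
               group
           _ = g * ((f (g : G ⧸ Subgroup.center G) : G) * h) * (f (h : G ⧸ Subgroup.center G) : G) := by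
               rw [hc]
           _ = g * (f (g : G ⧸ Subgroup.center G) : G) * (h * (f (h : G ⧸ Subgroup.center G) : G)) := by
               group },
     by
       constructor
       · intro g
         show g⁻¹ * (g * (f (g : G ⧸ Subgroup.center G) : G)) ∈ commutator G
         rw [inv_mul_cancel_left]
         exact (f _).2
       · intro z hz
         show z * (f (z : G ⧸ Subgroup.center G) : G) = z
         rw [(QuotientGroup.eq_one_iff _).mpr hz, map_one]
         simp⟩
  refine ⟨{ toFun := Φ, invFun := Ψ, left_inv := ?_, right_inv := ?_, map_mul' := ?_ }⟩
  · intro α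
    apply Subtype.ext
    apply MulEquiv.ext
    intro g
    show g * ((Φ α (g : G ⧸ Subgroup.center G) : commutator G) : G) = α.1 g
    show g * (g⁻¹ * α.1 g) = α.1 g
    rw [mul_inv_cancel_left]
  · intro f
    ext g
    show g⁻¹ * (g * (f (g : G ⧸ Subgroup.center G) : G)) = (f (g : G ⧸ Subgroup.center G) : G)
    rw [inv_mul_cancel_left]
  · intro α β
    ext g
    show g⁻¹ * (α.1 : MulAut G) ((β.1 : MulAut G) g)
        = (g⁻¹ * α.1 g) * (g⁻¹ * β.1 g)
    have hb : (β.1 : MulAut G) g = g * (g⁻¹ * β.1 g) := by rw [mul_inv_cancel_left]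
    have hz : g⁻¹ * β.1 g ∈ Subgroup.center G := h2 (β.2.1 g)
    rw [hb, map_mul, α.2.2 _ hz]
    group
end

section
/- Let G be a finitely generated nilpotent group of class at most 2 (i.e., G' ⊆ Z(G)) that is not torsion-free, and suppose G' is infinite and torsion-free. Then IA(G) is isomorphic to Inn(G) if and only if G' is isomorphic to the infinite cyclic group ℤ and the torsion-free rank of G/Z(G) equals the torsion-free rank of G/G'. -/
/-- The group of IA-automorphisms of `G`: automorphisms inducing the identity on the
abelianization `G/G'`. -/
def IA (G : Type*) [Group G] : Subgroup (MulAut G) where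
  carrier := {α | ∀ g : G, g⁻¹ * α g ∈ commutator G}
  one_mem' := by intro g; simp
  mul_mem' := by
    intro α β hα hβ g
    have h : g⁻¹ * (α * β) g = (g⁻¹ * β g) * ((β g)⁻¹ * α (β g)) := by
      simp [MulAut.mul_apply, mul_assoc]
    rw [Set.mem_setOf_eq] at *
    rw [h]
    exact mul_mem (hβ g) (hα (β g))
  inv_mem' := by
    intro α hα g
    have h := hα (α⁻¹ g)
    rw [MulAut.apply_inv_self] at h
    simpa using inv_mem h

/-- A monoid is torsion-free if every non-identity element has infinite order
(the definition of `Monoid.IsTorsionFree` in the older Mathlib, since removed). -/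
def Monoid.IsTorsionFree (G : Type*) [Monoid G] : Prop :=
  ∀ g : G, g ≠ 1 → ¬IsOfFinOrder g

/-- The group of inner automorphisms of `G`. -/
def Inn (G : Type*) [Group G] : Subgroup (MulAut G) :=
  (MulAut.conj : G →* MulAut G).range

/-- The torsion-free rank of a group: the supremum of ranks of free abelian subgroups.
For finitely generated (virtually) abelian groups this is the usual torsion-free rank. -/
noncomputable def torsionFreeRank (H : Type*) [Group H] : ℕ :=
  sSup {n : ℕ | ∃ f : Multiplicative (Fin n → ℤ) →* H, Function.Injective f}

open Module
open scoped commutatorElement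

section Convert

/-- CommGroup structure on a subgroup contained in the center. -/
@[reducible]
def commGroupOfLeCenter {G : Type*} [Group G] {H : Subgroup G} (h : H ≤ Subgroup.center G) :
    CommGroup H :=
  { (inferInstance : Group H) with
    mul_comm := fun a b => Subtype.ext (Subgroup.mem_center_iff.mp (h b.2) a) }

lemma noZeroSMulDivisors_of_isTorsionFree {H : Type*} [Group H]
    (htf : Monoid.IsTorsionFree H) : NoZeroSMulDivisors ℤ (Additive H) := by
  refine ⟨fun {c x} h => ?_⟩
  by_contra hne
  push_neg at hne
  apply htf x.toMul (fun h1 => hne.2 (by simpa using congrArg Additive.ofMul h1))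
  exact isOfFinOrder_iff_zpow_eq_one.mpr ⟨c, hne.1, by simpa using congrArg Additive.toMul h⟩

/-- A multiplicative equivalence out of an additive equivalence on `Additive`. -/
noncomputable def multEquivOfAddEquiv {H : Type*} {K : Type*} [CommGroup H] [AddCommGroup K]
    (e : Additive H ≃+ K) : H ≃* Multiplicative K :=
  (MulEquiv.multiplicativeAdditive H).symm.trans (AddEquiv.toMultiplicative e)

end Convert



section Rank

def extendZeroHom (m n : ℕ) (h : m ≤ n) : (Fin m → ℤ) →+ (Fin n → ℤ) where
  toFun v := fun j => if hj : (j : ℕ) < m then v ⟨j, hj⟩ else 0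
  map_zero' := by funext j; dsimp; split <;> rfl
  map_add' := by intro v w; funext j; dsimp; split <;> simp

lemma extendZeroHom_injective (m n : ℕ) (h : m ≤ n) :
    Function.Injective (extendZeroHom m n h) := by
  intro v w hvw
  funext i
  have h2 := congrFun hvw (Fin.castLE h i)
  have hi : ((Fin.castLE h i : Fin n) : ℕ) < m := by simpa using i.isLt
  simpa [extendZeroHom, hi, Fin.eta] using h2

lemma rank_le_of_inj {m n : ℕ} (f : Multiplicative (Fin m → ℤ) →* Multiplicative (Fin n → ℤ))
    (hf : Function.Injective f) : m ≤ n := by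
  set g : (Fin m → ℤ) →+ (Fin n → ℤ) := AddMonoidHom.toMultiplicative.symm f with hg
  have hginj : Function.Injective g := fun a b hab => hf hab
  have key := LinearMap.finrank_le_finrank_of_injective (f := g.toIntLinearMap) hginj
  simpa using key

/-- rank of a group isomorphic to `ℤ^n` is `n`. -/
lemma torsionFreeRank_of_mulEquiv {H : Type*} [Group H] {n : ℕ}
    (e : H ≃* Multiplicative (Fin n → ℤ)) : torsionFreeRank H = n := by
  have hset : {k : ℕ | ∃ f : Multiplicative (Fin k → ℤ) →* H, Function.Injective f}
      = Set.Iic n := by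
    ext m
    simp only [Set.mem_setOf_eq, Set.mem_Iic]
    constructor
    · rintro ⟨f, hf⟩
      exact rank_le_of_inj (e.toMonoidHom.comp f) ((e.injective).comp hf)
    · intro hm
      exact ⟨e.symm.toMonoidHom.comp (AddMonoidHom.toMultiplicative (extendZeroHom m n hm)),
        (e.symm.injective).comp (extendZeroHom_injective m n hm)⟩
  rw [torsionFreeRank, hset, csSup_Iic]

/-- a free linear-equiv presentation of a finite free module. -/
noncomputable def freeEquivFun (F : Type*) [AddCommGroup F] [Module ℤ F] [Module.Finite ℤ F]
    [Module.Free ℤ F] : F ≃ₗ[ℤ] (Fin (finrank ℤ F) → ℤ) :=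
  (Module.Free.chooseBasis ℤ F).equivFun.trans
    (LinearEquiv.funCongrLeft ℤ ℤ
      (Fintype.equivFinOfCardEq (Module.finrank_eq_card_chooseBasisIndex ℤ F).symm).symm)

end Rank

section RankCompute

variable {H : Type*} [CommGroup H] [Module.Finite ℤ (Additive H)]

lemma torsionFreeRank_eq_finrank_quotient_torsion :
    torsionFreeRank H =
      finrank ℤ ((Additive H) ⧸ Submodule.torsion ℤ (Additive H)) := by
  classical
  set M := Additive H with hM
  set T := Submodule.torsion ℤ M with hT
  set r := finrank ℤ (M ⧸ T) with hr
  have hset : {k : ℕ | ∃ f : Multiplicative (Fin k → ℤ) →* H, Function.Injective f}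
      = Set.Iic r := by
    ext m
    simp only [Set.mem_setOf_eq, Set.mem_Iic]
    constructor
    · rintro ⟨f, hf⟩
      set g : (Fin m → ℤ) →+ M := MonoidHom.toAdditiveRight f with hgdef
      have hg : Function.Injective g := fun a b hab => hf (congrArg Additive.toMul hab)
      set u : (Fin m → ℤ) →ₗ[ℤ] M := g.toIntLinearMap with hu
      have hinj : Function.Injective (T.mkQ ∘ₗ u) := by
        rw [injective_iff_map_eq_zero]
        intro x hx
        have hxT : u x ∈ T := by
          rwa [LinearMap.comp_apply, Submodule.mkQ_apply, Submodule.Quotient.mk_eq_zero] at hx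
        obtain ⟨c, hc⟩ := hxT
        rw [Submonoid.smul_def] at hc
        have : u ((c : ℤ) • x) = 0 := by rw [map_smul, hc]
        have hcx : (c : ℤ) • x = 0 := hg (by rw [map_zero]; exact this)
        have hc0 : (c : ℤ) ≠ 0 := nonZeroDivisors.coe_ne_zero c
        rcases smul_eq_zero.mp hcx with h | h
        · exact absurd h hc0
        · exact h
      have key := LinearMap.finrank_le_finrank_of_injective (f := T.mkQ ∘ₗ u) hinj
      simpa using key
    · intro hm
      have e : (M ⧸ T) ≃ₗ[ℤ] (Fin r → ℤ) := freeEquivFun (M ⧸ T)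
      obtain ⟨s, hs⟩ := Module.projective_lifting_property T.mkQ e.symm.toLinearMap
        T.mkQ_surjective
      have hsinj : Function.Injective s := by
        intro a b hab
        apply e.symm.injective
        have h1 := LinearMap.congr_fun hs a
        have h2 := LinearMap.congr_fun hs b
        simp only [LinearMap.comp_apply, LinearEquiv.coe_coe] at h1 h2
        rw [← h1, ← h2, hab]
      refine ⟨AddMonoidHom.toMultiplicativeLeft
        ((s.toAddMonoidHom).comp (extendZeroHom m r hm)), ?_⟩
      intro a b hab
      exact extendZeroHom_injective m r hm (hsinj (congrArg Additive.ofMul hab))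
  rw [torsionFreeRank, hset, csSup_Iic]

end RankCompute



section Central
variable {G : Type*} [Group G] (h2 : commutator G ≤ Subgroup.center G)

lemma commEl_mem (g h : G) : ⁅g, h⁆ ∈ commutator G :=
  Subgroup.commutator_mem_commutator (Subgroup.mem_top g) (Subgroup.mem_top h)

include h2

lemma commEl_central (g h z : G) : z * ⁅g, h⁆ = ⁅g, h⁆ * z :=
  (Subgroup.mem_center_iff.mp (h2 (commEl_mem g h)) z)

lemma commEl_mul_left (a b c : G) : ⁅a * b, c⁆ = ⁅a, c⁆ * ⁅b, c⁆ := by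
  have key : ⁅a * b, c⁆ = a * ⁅b, c⁆ * a⁻¹ * ⁅a, c⁆ := by
    simp only [commutatorElement_def]; group
  rw [key, commEl_central h2 b c a]
  simp only [mul_assoc, mul_inv_cancel_left]
  exact commEl_central h2 a c ⁅b,c⁆

lemma commEl_mul_right (a b c : G) : ⁅a, b * c⁆ = ⁅a, b⁆ * ⁅a, c⁆ := by
  have : ⁅a, b * c⁆ = ⁅b * c, a⁆⁻¹ := (commutatorElement_inv _ _).symm
  rw [this, commEl_mul_left h2, mul_inv_rev, commutatorElement_inv, commutatorElement_inv,
    ← commEl_central h2]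

lemma commEl_inv_left (a b : G) : ⁅a⁻¹, b⁆ = ⁅a, b⁆⁻¹ := by
  have h := commEl_mul_left h2 a⁻¹ a b
  rw [inv_mul_cancel, commutatorElement_one_left] at h
  exact (eq_inv_of_mul_eq_one_left h.symm)

lemma commEl_inv_right (a b : G) : ⁅a, b⁻¹⁆ = ⁅a, b⁆⁻¹ := by
  rw [← commutatorElement_inv b⁻¹ a, commEl_inv_left h2, inv_inv]
  exact (commutatorElement_inv a b).symm

lemma commEl_pow_left (a b : G) (n : ℕ) : ⁅a ^ n, b⁆ = ⁅a, b⁆ ^ n := by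
  induction n with
  | zero => simp
  | succ n ih => rw [pow_succ, commEl_mul_left h2, ih, pow_succ]

lemma commEl_zpow_left (a b : G) (n : ℤ) : ⁅a ^ n, b⁆ = ⁅a, b⁆ ^ n := by
  cases n with
  | ofNat m => simpa using commEl_pow_left h2 a b m
  | negSucc m => rw [zpow_negSucc, zpow_negSucc, ← commEl_pow_left h2, commEl_inv_left h2]

/-- commutators don't change under central perturbation -/
lemma commEl_mul_central (a b x y : G) (hx : x ∈ Subgroup.center G)
    (hy : y ∈ Subgroup.center G) : ⁅a * x, b * y⁆ = ⁅a, b⁆ := by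
  have hx1 : ∀ c : G, ⁅x, c⁆ = 1 := fun c =>
    commutatorElement_eq_one_iff_mul_comm.mpr (Subgroup.mem_center_iff.mp hx c).symm
  have hy1 : ∀ c : G, ⁅c, y⁆ = 1 := fun c =>
    commutatorElement_eq_one_iff_mul_comm.mpr (Subgroup.mem_center_iff.mp hy c)
  rw [commEl_mul_left h2, hx1, mul_one, commEl_mul_right h2, hy1, mul_one]

/-- The commutator subgroup of an f.g. class-2 group is f.g. -/
lemma commutator_fg_of_le_center [hfg : Group.FG G] : Group.FG (commutator G) := by
  obtain ⟨S, hScl, hSfin⟩ := Group.fg_iff.mp hfg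
  set B : Set G := (fun p : G × G => ⁅p.1, p.2⁆) '' (S ×ˢ S) with hB
  set K : Subgroup G := Subgroup.closure B with hK
  have hKle : K ≤ commutator G := by
    rw [hK, Subgroup.closure_le]
    rintro x ⟨⟨a, b⟩, _, rfl⟩
    exact commEl_mem a b
  have key : ∀ g h : G, ⁅g, h⁆ ∈ K := by
    intro g h
    have hg : g ∈ Subgroup.closure S := by rw [hScl]; trivial
    have hh : h ∈ Subgroup.closure S := by rw [hScl]; trivial
    refine Subgroup.closure_induction₂
      (p := fun x y _ _ => ⁅x, y⁆ ∈ K) ?_ ?_ ?_ ?_ ?_ ?_ ?_ hg hh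
    · intro x y hx hy
      exact Subgroup.subset_closure ⟨(x, y), Set.mk_mem_prod hx hy, rfl⟩
    · intro x _; simp only [commutatorElement_one_left]; exact one_mem K
    · intro x _; simp only [commutatorElement_one_right]; exact one_mem K
    · intro x y z _ _ _ hxz hyz
      rw [commEl_mul_left h2]; exact mul_mem hxz hyz
    · intro y z x _ _ _ hxy hxz
      rw [commEl_mul_right h2]; exact mul_mem hxy hxz
    · intro x y _ _ hxy
      rw [commEl_inv_left h2]; exact inv_mem hxy
    · intro x y _ _ hxy
      rw [commEl_inv_right h2]; exact inv_mem hxy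
  have hle2 : commutator G ≤ K := by
    rw [commutator_eq_closure, Subgroup.closure_le]
    rintro x ⟨a, b, rfl⟩
    exact key a b
  have hKeq : K = commutator G := le_antisymm hKle hle2
  rw [Group.fg_iff_subgroup_fg, ← hKeq, Subgroup.fg_iff]
  exact ⟨B, rfl, (hSfin.prod hSfin).image _⟩

/-- The quotient by a normal subgroup containing the commutator subgroup is abelian. -/
@[reducible]
def quotCommGroupOfCommutatorLe {N : Subgroup G} [N.Normal] (h : commutator G ≤ N) :
    CommGroup (G ⧸ N) :=
  { (inferInstance : Group (G ⧸ N)) with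
    mul_comm := fun a b => by
      induction a using QuotientGroup.induction_on with | _ g =>
      induction b using QuotientGroup.induction_on with | _ k =>
      change QuotientGroup.mk (g * k) = QuotientGroup.mk (k * g)
      rw [QuotientGroup.eq]
      have : (g * k)⁻¹ * (k * g) = ⁅k⁻¹, g⁻¹⁆ := by
        simp only [commutatorElement_def]; group
      rw [this]
      exact h (commEl_mem _ _) }

/-- `G/Z(G)` is torsion-free when the commutator subgroup is central and torsion-free. -/
lemma quotient_center_torsionFree (htf' : Monoid.IsTorsionFree (commutator G)) :
    Monoid.IsTorsionFree (G ⧸ Subgroup.center G) := by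
  intro q hq hfin
  apply hq
  induction q using QuotientGroup.induction_on with | _ g =>
  obtain ⟨n, hn, hgn⟩ := isOfFinOrder_iff_pow_eq_one.mp hfin
  have hgnZ : g ^ n ∈ Subgroup.center G := by
    rw [← QuotientGroup.eq_one_iff]
    exact_mod_cast hgn
  rw [QuotientGroup.eq_one_iff]
  rw [Subgroup.mem_center_iff]
  intro h
  rw [← commutatorElement_eq_one_iff_mul_comm]
  have h1 : ⁅g, h⁆ ^ n = 1 := by
    rw [← commEl_pow_left h2]
    exact commutatorElement_eq_one_iff_mul_comm.mpr
      (Subgroup.mem_center_iff.mp hgnZ h).symm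
  by_contra hne
  have h1' : ⁅h, g⁆ ^ n = 1 := by
    rw [← commutatorElement_inv g h, inv_pow, h1, inv_one]
  have : IsOfFinOrder (⟨⁅h, g⁆, commEl_mem h g⟩ : commutator G) := by
    apply isOfFinOrder_iff_pow_eq_one.mpr
    exact ⟨n, hn, by ext; simpa using h1'⟩
  exact htf' _ (fun hh => hne (by simpa using Subtype.ext_iff.mp hh)) this

end Central


section IAHom
variable {G : Type*} [Group G] (h2 : commutator G ≤ Subgroup.center G)
include h2

lemma IA_fixes (α : MulAut G) (hα : ∀ g : G, g⁻¹ * α g ∈ commutator G)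
    {c : G} (hc : c ∈ commutator G) : α c = c := by
  rw [commutator_eq_closure] at hc
  induction hc using Subgroup.closure_induction with
  | mem x hx =>
      obtain ⟨a, b, rfl⟩ := hx
      have ha := h2 (hα a); have hb := h2 (hα b)
      calc α ⁅a, b⁆ = ⁅α a, α b⁆ := by rw [map_commutatorElement]
        _ = ⁅a * (a⁻¹ * α a), b * (b⁻¹ * α b)⁆ := by
            rw [mul_inv_cancel_left, mul_inv_cancel_left]
        _ = ⁅a, b⁆ := commEl_mul_central h2 a b _ _ ha hb
  | one => exact map_one α
  | mul x y hx hy ihx ihy => rw [map_mul, ihx, ihy]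
  | inv x hx ih => rw [map_inv, ih]

omit h2 in
lemma quot_mk_mul_commutator (g : G) (c : commutator G) :
    (QuotientGroup.mk (g * c) : G ⧸ commutator G) = QuotientGroup.mk g := by
  rw [QuotientGroup.mk_mul, (QuotientGroup.eq_one_iff (c : G)).mpr c.2, mul_one]

/-- The IA-group of a class-2 group is the group of homomorphisms from the
abelianization to the commutator subgroup. -/
noncomputable def iaMulEquiv :
    letI : CommGroup (commutator G) := commGroupOfLeCenter h2
    ((G ⧸ commutator G) →* (commutator G)) ≃* IA G := by
  letI : CommGroup (commutator G) := commGroupOfLeCenter h2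
  have hcen : ∀ c : G, c ∈ commutator G → ∀ y : G, y * c = c * y := fun c hc y =>
    Subgroup.mem_center_iff.mp (h2 hc) y
  -- the automorphism associated to a homomorphism
  refine
    { toFun := fun f =>
        ⟨{ toFun := fun g => g * (f (QuotientGroup.mk g) : G)
           invFun := fun g => g * ((f (QuotientGroup.mk g) : G))⁻¹
           left_inv := fun x => by
             simp only []
             rw [quot_mk_mul_commutator x (f (QuotientGroup.mk x)), mul_inv_cancel_right]
           right_inv := fun x => by
             simp only []
             rw [show x * (↑(f (QuotientGroup.mk x)))⁻¹ = x * ↑((f (QuotientGroup.mk x))⁻¹) by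
                   simp,
               quot_mk_mul_commutator x ((f (QuotientGroup.mk x))⁻¹)]
             simp
           map_mul' := fun x y => by
             simp only [QuotientGroup.mk_mul, map_mul, Subgroup.coe_mul]
             simp only [← mul_assoc]
             rw [mul_assoc x y, hcen _ (f (QuotientGroup.mk x)).2 y, ← mul_assoc] },
         fun g => by simp⟩
      invFun := fun α =>
        QuotientGroup.lift (commutator G)
          { toFun := fun g => (⟨g⁻¹ * α.1 g, α.2 g⟩ : commutator G)
            map_one' := by ext; simp
            map_mul' := fun x y => by
              ext
              simp only [Subgroup.coe_mul, map_mul, mul_inv_rev]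
              rw [show y⁻¹ * x⁻¹ * (α.1 x * α.1 y) = y⁻¹ * (x⁻¹ * α.1 x) * α.1 y by
                    simp [mul_assoc],
                hcen _ (α.2 x) y⁻¹]
              simp [mul_assoc] }
          (fun c hc => by
            have hα : ∀ g : G, g⁻¹ * α.1 g ∈ commutator G := α.2
            ext
            show c⁻¹ * α.1 c = 1
            rw [IA_fixes h2 α.1 hα hc, inv_mul_cancel])
      left_inv := fun f => by
        ext g
        show (g⁻¹ * (g * ↑(f (QuotientGroup.mk g))) : G) = ↑(f (QuotientGroup.mk g))
        rw [inv_mul_cancel_left]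
      right_inv := fun α => by
        ext g
        show (g * (g⁻¹ * α.1 g) : G) = α.1 g
        rw [mul_inv_cancel_left]
      map_mul' := fun f₁ f₂ => by
        ext g
        simp only [MonoidHom.mul_apply, Subgroup.coe_mul]
        show g * (↑(f₁ (QuotientGroup.mk g)) * ↑(f₂ (QuotientGroup.mk g)))
            = (g * ↑(f₂ (QuotientGroup.mk g))) * ↑(f₁ (QuotientGroup.mk (g * ↑(f₂ (QuotientGroup.mk g)))))
        rw [quot_mk_mul_commutator g (f₂ (QuotientGroup.mk g)), mul_assoc,
          hcen _ (f₁ (QuotientGroup.mk g)).2 (↑(f₂ (QuotientGroup.mk g)) : G)] }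

omit h2 in
lemma conj_ker_eq_center : (MulAut.conj : G →* MulAut G).ker = Subgroup.center G := by
  ext g
  rw [MonoidHom.mem_ker, Subgroup.mem_center_iff]
  constructor
  · intro hg h
    have := DFunLike.congr_fun hg h
    simp only [MulAut.conj_apply, MulAut.one_apply] at this
    exact (mul_inv_eq_iff_eq_mul.mp this).symm
  · intro hg
    ext h
    simp only [MulAut.conj_apply, MulAut.one_apply]
    rw [← hg h, mul_inv_cancel_right]

omit h2 in
noncomputable def innEquiv : (G ⧸ Subgroup.center G) ≃* Inn G :=
  (QuotientGroup.quotientMulEquivOfEq conj_ker_eq_center.symm).trans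
    (QuotientGroup.quotientKerEquivRange _)

end IAHom

section Assembly

/-- Precomposition with the quotient-by-torsion map is an equivalence on hom modules
into a torsion-free module. -/
noncomputable def quotTorsionHomEquiv (A V : Type*) [AddCommGroup A]
    [AddCommGroup V] [NoZeroSMulDivisors ℤ V] :
    ((A ⧸ Submodule.torsion ℤ A) →ₗ[ℤ] V) ≃ₗ[ℤ] (A →ₗ[ℤ] V) where
  toFun g := g ∘ₗ (Submodule.torsion ℤ A).mkQ
  map_add' := fun a b => by ext x; rfl
  map_smul' := fun c g => by ext x; rfl
  invFun f := Submodule.liftQ (Submodule.torsion ℤ A) f (by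
    intro x hx
    obtain ⟨c, hc⟩ := hx
    rw [Submonoid.smul_def] at hc
    have h0 : (c : ℤ) • f x = 0 := by rw [← map_smul, hc, map_zero]
    rw [LinearMap.mem_ker]
    rcases smul_eq_zero.mp h0 with h | h
    · exact absurd h (nonZeroDivisors.coe_ne_zero c)
    · exact h)
  left_inv g := by
    refine LinearMap.ext fun x => ?_
    obtain ⟨y, rfl⟩ := Submodule.Quotient.mk_surjective _ x
    simp only [Submodule.liftQ_apply, LinearMap.comp_apply, Submodule.mkQ_apply]
  right_inv f := by
    refine LinearMap.ext fun x => ?_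
    simp only [Submodule.liftQ_apply, LinearMap.comp_apply, Submodule.mkQ_apply]

/-- Homomorphisms into a multiplicative group, as a multiplicative group of
additive homomorphisms. -/
def homMulEquivAddHom {Q : Type*} [Group Q] {V : Type*} [AddCommGroup V] :
    (Q →* Multiplicative V) ≃* Multiplicative (Additive Q →+ V) :=
  { MonoidHom.toAdditiveLeft with map_mul' := fun f g => rfl }

/-- transport along an equality of ranks -/
noncomputable def multFinCongr {a b : ℕ} (h : a = b) :
    Multiplicative (Fin a → ℤ) ≃* Multiplicative (Fin b → ℤ) :=
  AddEquiv.toMultiplicative (LinearEquiv.funCongrLeft ℤ ℤ (finCongr h.symm)).toAddEquiv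

lemma injective_mkQ_comp {M A : Type*} [AddCommGroup M]
    [NoZeroSMulDivisors ℤ M] [AddCommGroup A] (u : M →ₗ[ℤ] A)
    (hu : Function.Injective u) :
    Function.Injective ((Submodule.torsion ℤ A).mkQ ∘ₗ u) := by
  rw [injective_iff_map_eq_zero]
  intro x hx
  have hxT : u x ∈ Submodule.torsion ℤ A := by
    rwa [LinearMap.comp_apply, Submodule.mkQ_apply, Submodule.Quotient.mk_eq_zero] at hx
  obtain ⟨c, hc⟩ := hxT
  rw [Submonoid.smul_def] at hc
  have h0 : u ((c : ℤ) • x) = 0 := by rw [map_smul, hc]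
  have hcx : (c : ℤ) • x = 0 := hu (by simpa using h0)
  rcases smul_eq_zero.mp hcx with h | h
  · exact absurd h (nonZeroDivisors.coe_ne_zero c)
  · exact h

end Assembly

lemma isOfFinOrder_of_zpow_eq_one' {H : Type*} [Group H] {x : H} {n : ℤ} (hn : n ≠ 0)
    (h : x ^ n = 1) : IsOfFinOrder x := by
  apply isOfFinOrder_iff_pow_eq_one.mpr
  refine ⟨n.natAbs, Int.natAbs_pos.mpr hn, ?_⟩
  rcases Int.natAbs_eq n with he | he
  · rw [← zpow_natCast, ← he, h]
  · rw [← zpow_natCast]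
    have h3 : (n.natAbs : ℤ) = -n := by omega
    rw [h3, zpow_neg, h, inv_one]

/-- For a finitely generated nilpotent group `G` of class at most 2 which is not
torsion-free and whose derived subgroup is infinite and torsion-free, `IA(G) ≅ Inn(G)`
iff `G' ≅ ℤ` and the torsion-free ranks of `G/Z(G)` and `G/G'` coincide. -/
theorem IA_iso_Inn_iff_of_commutator_torsionFree (G : Type*) [Group G] [Group.FG G]
    (hntf : ¬ Monoid.IsTorsionFree G) (h2 : commutator G ≤ Subgroup.center G)
    (hinf : Infinite (commutator G))
    (htf' : Monoid.IsTorsionFree (commutator G)) :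
    Nonempty (IA G ≃* Inn G) ↔
      Nonempty ((commutator G) ≃* Multiplicative ℤ) ∧
        torsionFreeRank (G ⧸ Subgroup.center G) = torsionFreeRank (G ⧸ commutator G) := by
  classical
  letI instC : CommGroup (commutator G) := commGroupOfLeCenter h2
  letI instQ : CommGroup (G ⧸ commutator G) := quotCommGroupOfCommutatorLe le_rfl
  letI instZ : CommGroup (G ⧸ Subgroup.center G) := quotCommGroupOfCommutatorLe h2
  -- the commutator subgroup is f.g. free abelian of rank k
  haveI : Group.FG (commutator G) := commutator_fg_of_le_center h2
  haveI : Module.Finite ℤ (Additive (commutator G)) :=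
    Module.Finite.iff_addGroup_fg.mpr inferInstance
  haveI : NoZeroSMulDivisors ℤ (Additive (commutator G)) :=
    noZeroSMulDivisors_of_isTorsionFree htf'
  haveI : Module.IsTorsionFree ℤ (Additive (commutator G)) :=
    .of_smul_eq_zero fun _ _ h => smul_eq_zero.mp h
  set k := Module.finrank ℤ (Additive (commutator G)) with hkdef
  have eC : (commutator G) ≃* Multiplicative (Fin k → ℤ) :=
    multEquivOfAddEquiv (freeEquivFun (Additive (commutator G))).toAddEquiv
  -- G/Z(G) is f.g. free abelian of rank p
  haveI : Module.Finite ℤ (Additive (G ⧸ Subgroup.center G)) :=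
    Module.Finite.iff_addGroup_fg.mpr inferInstance
  haveI : NoZeroSMulDivisors ℤ (Additive (G ⧸ Subgroup.center G)) :=
    noZeroSMulDivisors_of_isTorsionFree (quotient_center_torsionFree h2 htf')
  haveI : Module.IsTorsionFree ℤ (Additive (G ⧸ Subgroup.center G)) :=
    .of_smul_eq_zero fun _ _ h => smul_eq_zero.mp h
  set p := Module.finrank ℤ (Additive (G ⧸ Subgroup.center G)) with hpdef
  have eZ : (G ⧸ Subgroup.center G) ≃* Multiplicative (Fin p → ℤ) :=
    multEquivOfAddEquiv (freeEquivFun (Additive (G ⧸ Subgroup.center G))).toAddEquiv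
  have eInn : Inn G ≃* Multiplicative (Fin p → ℤ) := (innEquiv).symm.trans eZ
  -- G/G' : f.g. abelian, of torsion-free rank r
  haveI : Module.Finite ℤ (Additive (G ⧸ commutator G)) :=
    Module.Finite.iff_addGroup_fg.mpr inferInstance
  set A := Additive (G ⧸ commutator G) with hAdef
  set T := Submodule.torsion ℤ A with hTdef
  set r := Module.finrank ℤ (A ⧸ T) with hrdef
  -- torsion-free ranks
  have hZrank : torsionFreeRank (G ⧸ Subgroup.center G) = p := torsionFreeRank_of_mulEquiv eZ
  have hQrank : torsionFreeRank (G ⧸ commutator G) = r :=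
    torsionFreeRank_eq_finrank_quotient_torsion
  -- IA(G) is free abelian of rank r * k
  have eIA : IA G ≃* Multiplicative (Fin (r * k) → ℤ) := by
    refine ((iaMulEquiv h2).symm.trans ?_)
    refine (MulEquiv.monoidHomCongrRight eC).trans ?_
    refine homMulEquivAddHom.trans ?_
    refine AddEquiv.toMultiplicative ?_
    refine ((addMonoidHomLequivInt (B := Fin k → ℤ) ℤ).toAddEquiv).trans ?_
    refine ((quotTorsionHomEquiv A (Fin k → ℤ)).symm.toAddEquiv).trans ?_
    refine ((LinearEquiv.arrowCongr (freeEquivFun (A ⧸ T))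
      (LinearEquiv.refl ℤ (Fin k → ℤ))).toAddEquiv).trans ?_
    refine ((LinearEquiv.piRing ℤ (Fin k → ℤ) (Fin r) ℤ).toAddEquiv).trans ?_
    refine ((LinearEquiv.curry ℤ ℤ (Fin r) (Fin k)).symm.toAddEquiv).trans ?_
    exact (LinearEquiv.funCongrLeft ℤ ℤ finProdFinEquiv.symm).toAddEquiv
  -- 1 ≤ k
  have hk1 : 1 ≤ k := by
    by_contra hcon
    have hk0 : k = 0 := by omega
    haveI : IsEmpty (Fin k) := ⟨fun i => absurd i.isLt (by omega)⟩
    haveI : Infinite (Multiplicative (Fin k → ℤ)) := Infinite.of_injective eC eC.injective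
    haveI : Infinite (Fin k → ℤ) :=
      Infinite.of_injective (⇑Multiplicative.toAdd) Multiplicative.toAdd.injective
    exact not_finite (Fin k → ℤ)
  -- p ≤ r
  have hpr : p ≤ r := by
    set φ : (G ⧸ commutator G) →* (G ⧸ Subgroup.center G) :=
      QuotientGroup.map (commutator G) (Subgroup.center G) (MonoidHom.id G)
        (by simpa using h2) with hφdef
    have hφsurj : Function.Surjective φ := by
      intro x
      induction x using QuotientGroup.induction_on with | _ g =>
      exact ⟨QuotientGroup.mk g, rfl⟩
    set π : A →ₗ[ℤ] Additive (G ⧸ Subgroup.center G) :=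
      (MonoidHom.toAdditive φ).toIntLinearMap with hπdef
    have hπsurj : Function.Surjective π := by
      intro x
      obtain ⟨y, hy⟩ := hφsurj x.toMul
      exact ⟨Additive.ofMul y, congrArg Additive.ofMul hy⟩
    obtain ⟨s, hs⟩ := Module.projective_lifting_property π
      ((freeEquivFun (Additive (G ⧸ Subgroup.center G))).symm.toLinearMap) hπsurj
    have hsinj : Function.Injective s := by
      intro a b hab
      apply (freeEquivFun (Additive (G ⧸ Subgroup.center G))).symm.injective
      have hh1 := LinearMap.congr_fun hs a
      have hh2 := LinearMap.congr_fun hs b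
      simp only [LinearMap.comp_apply, LinearEquiv.coe_coe] at hh1 hh2
      rw [← hh1, ← hh2, hab]
    have key := LinearMap.finrank_le_finrank_of_injective
      (f := T.mkQ ∘ₗ s) (injective_mkQ_comp s hsinj)
    simpa using key
  -- 1 ≤ r
  have hr1 : 1 ≤ r := by
    by_contra hcon
    have hr0 : r = 0 := by omega
    haveI hsub : Subsingleton (A ⧸ T) := Module.finrank_zero_iff.mp (hrdef.symm.trans hr0)
    have hcomm : ∀ g h : G, ⁅g, h⁆ = 1 := by
      intro g h
      have hx : (Additive.ofMul (QuotientGroup.mk g : G ⧸ commutator G) : A) ∈ T := by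
        rw [← Submodule.Quotient.mk_eq_zero]
        exact Subsingleton.elim _ _
      obtain ⟨c, hc⟩ := hx
      rw [Submonoid.smul_def] at hc
      have h1 : (QuotientGroup.mk g : G ⧸ commutator G) ^ ((c : ℤ)) = 1 :=
        Additive.ofMul.injective (by rw [ofMul_zpow]; simpa using hc)
      have hgn : g ^ ((c : ℤ)) ∈ commutator G := by
        rw [← QuotientGroup.eq_one_iff]
        rw [QuotientGroup.mk_zpow]
        exact h1
      have hc1 : ⁅g, h⁆ ^ ((c : ℤ)) = 1 := by
        rw [← commEl_zpow_left h2]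
        exact commutatorElement_eq_one_iff_mul_comm.mpr
          (Subgroup.mem_center_iff.mp (h2 hgn) h).symm
      by_contra hne
      have hfin : IsOfFinOrder (⟨⁅g, h⁆, commEl_mem g h⟩ : commutator G) := by
        apply isOfFinOrder_of_zpow_eq_one' (nonZeroDivisors.coe_ne_zero c)
        ext
        show ⁅g, h⁆ ^ ((c : ℤ)) = 1
        exact hc1
      exact htf' _ (fun hh => hne (by simpa using Subtype.ext_iff.mp hh)) hfin
    haveI : Subsingleton (commutator G) := by
      constructor
      intro a b
      have hbot : commutator G ≤ ⊥ := by
        rw [commutator_eq_closure, Subgroup.closure_le]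
        rintro x ⟨g, h, rfl⟩
        simp [hcomm g h]
      ext
      have ha := hbot a.2
      have hb := hbot b.2
      rw [Subgroup.mem_bot] at ha hb
      rw [ha, hb]
    exact not_finite (commutator G)
  -- final bookkeeping
  constructor
  · rintro ⟨e⟩
    have h1 : torsionFreeRank (Multiplicative (Fin (r * k) → ℤ)) = r * k :=
      torsionFreeRank_of_mulEquiv (MulEquiv.refl _)
    have h2' : torsionFreeRank (Multiplicative (Fin (r * k) → ℤ)) = p :=
      torsionFreeRank_of_mulEquiv ((eIA.symm.trans e).trans eInn)
    have hcomp : r * k = p := h1.symm.trans h2'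
    have hkone : k = 1 := by
      by_contra hne
      have h2k : 2 ≤ k := by omega
      have hmul : r * 2 ≤ r * k := Nat.mul_le_mul_left r h2k
      linarith [hmul, hcomp, hpr, hr1]
    have hpeq : p = r := by
      rw [hkone, mul_one] at hcomp
      omega
    refine ⟨⟨eC.trans ((multFinCongr hkone).trans
      (AddEquiv.toMultiplicative (LinearEquiv.funUnique (Fin 1) ℤ ℤ).toAddEquiv))⟩, ?_⟩
    rw [hZrank, hQrank, hpeq]
  · rintro ⟨⟨eZ1⟩, hranks⟩
    have hkone : k = 1 := by
      have hh1 : torsionFreeRank (commutator G) = k := torsionFreeRank_of_mulEquiv eC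
      have hh2 : torsionFreeRank (commutator G) = 1 :=
        torsionFreeRank_of_mulEquiv (eZ1.trans
          (AddEquiv.toMultiplicative (LinearEquiv.funUnique (Fin 1) ℤ ℤ).symm.toAddEquiv))
      omega
    have hpeq : p = r := by
      rw [hZrank, hQrank] at hranks
      exact hranks
    exact ⟨eIA.trans ((multFinCongr (by rw [hkone, mul_one, hpeq])).trans eInn.symm)⟩
end

section
/- Let G be a finite nilpotent group of class at most 2 (i.e., G' ⊆ Z(G)) that can be generated by 2 elements. Then every IA-automorphism of G is an inner automorphism, i.e., IA(G) = Inn(G). -/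
open scoped commutatorElement

section Aux

variable {G : Type*} [Group G]

lemma comm_central (h2 : commutator G ≤ Subgroup.center G) (x y : G) :
    ⁅x, y⁆ ∈ Subgroup.center G := by
  apply h2
  rw [commutator_def]
  exact Subgroup.commutator_mem_commutator (Subgroup.mem_top x) (Subgroup.mem_top y)

lemma comm_mul_left (h2 : commutator G ≤ Subgroup.center G) (x y z : G) :
    ⁅x * y, z⁆ = ⁅x, z⁆ * ⁅y, z⁆ := by
  have hw := Subgroup.mem_center_iff.mp (comm_central h2 y z)
  have h1 : ⁅x * y, z⁆ = x * ⁅y, z⁆ * x⁻¹ * ⁅x, z⁆ := by group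
  rw [h1, hw x, mul_inv_cancel_right, ← hw ⁅x, z⁆]

/-- For fixed `z`, the map `x ↦ ⁅x, z⁆` is a homomorphism in class-2 groups. -/
def commHom (h2 : commutator G ≤ Subgroup.center G) (z : G) : G →* G where
  toFun x := ⁅x, z⁆
  map_one' := by group
  map_mul' x y := comm_mul_left h2 x y z

lemma comm_mul_right (h2 : commutator G ≤ Subgroup.center G) (x y z : G) :
    ⁅x, y * z⁆ = ⁅x, y⁆ * ⁅x, z⁆ := by
  have hw := Subgroup.mem_center_iff.mp (comm_central h2 x z)
  rw [← commutatorElement_inv, comm_mul_left h2, mul_inv_rev,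
    commutatorElement_inv, commutatorElement_inv, hw]

lemma comm_inv_right (h2 : commutator G ≤ Subgroup.center G) (x y : G) :
    ⁅x, y⁻¹⁆ = ⁅x, y⁆⁻¹ := by
  have h := comm_mul_right h2 x y y⁻¹
  simp at h
  rw [eq_inv_of_mul_eq_one_right h.symm]

lemma comm_mem_zpowers (h2 : commutator G ≤ Subgroup.center G) {a b : G}
    (hab : Subgroup.closure {a, b} = ⊤) (x y : G) :
    ⁅x, y⁆ ∈ Subgroup.zpowers ⁅a, b⁆ := by
  have step1 : ∀ t ∈ ({a, b} : Set G), ∀ y : G, ⁅t, y⁆ ∈ Subgroup.zpowers ⁅a, b⁆ := by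
    intro t ht y
    have hy : y ∈ Subgroup.closure ({a, b} : Set G) := by rw [hab]; trivial
    induction hy using Subgroup.closure_induction with
    | mem s hs =>
      rcases ht with rfl | rfl <;> rcases hs with rfl | rfl
      · rw [commutatorElement_self]; exact one_mem _
      · exact Subgroup.mem_zpowers _
      · have h : ⁅t, s⁆ = ⁅s, t⁆⁻¹ := (commutatorElement_inv s t).symm
        rw [h]; exact inv_mem (Subgroup.mem_zpowers _)
      · rw [commutatorElement_self]; exact one_mem _
    | one => rw [commutatorElement_one_right]; exact one_mem _
    | mul u v hu hv ihu ihv => rw [comm_mul_right h2]; exact mul_mem ihu ihv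
    | inv u hu ihu => rw [comm_inv_right h2]; exact inv_mem ihu
  have hx : x ∈ Subgroup.closure ({a, b} : Set G) := by rw [hab]; trivial
  induction hx using Subgroup.closure_induction with
  | mem s hs => exact step1 s hs y
  | one => rw [commutatorElement_one_left]; exact one_mem _
  | mul u v hu hv ihu ihv => rw [comm_mul_left h2]; exact mul_mem ihu ihv
  | inv u hu ihu =>
    have : ⁅u⁻¹, y⁆ = ⁅u, y⁆⁻¹ := by
      have := map_inv (commHom h2 y) u
      simpa [commHom] using this
    rw [this]; exact inv_mem ihu

end Aux



/-- In a 2-generated finite nilpotent group of class at most 2, every IA-automorphism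
is inner. -/
theorem IA_eq_Inn_of_two_generated (G : Type*) [Group G] [Finite G]
    (h2 : commutator G ≤ Subgroup.center G)
    (hgen : ∃ a b : G, Subgroup.closure {a, b} = ⊤) :
    IA G = Inn G := by
  obtain ⟨a, b, hab⟩ := hgen
  have hle : commutator G ≤ Subgroup.zpowers ⁅a, b⁆ := by
    rw [commutator_def]
    exact Subgroup.commutator_le.mpr fun x _ y _ => comm_mem_zpowers h2 hab x y
  have zp : ∀ (u v : G) (k : ℤ), ⁅u ^ k, v⁆ = ⁅u, v⁆ ^ k := fun u v k =>
    map_zpow (commHom h2 v) u k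
  have hcentral : ∀ k : ℤ, ⁅a, b⁆ ^ k ∈ Subgroup.center G := fun k =>
    Subgroup.zpow_mem _ (comm_central h2 a b) k
  have test : ∀ α : MulAut G, (∀ g : G, g⁻¹ * α g ∈ commutator G) →
      ∃ x : G, MulAut.conj x = α := by
    intro α hα
    obtain ⟨m, hm⟩ := Subgroup.mem_zpowers_iff.mp (hle (hα a))
    obtain ⟨n, hn⟩ := Subgroup.mem_zpowers_iff.mp (hle (hα b))
    set x := a ^ n * b ^ (-m) with hx
    have hba : ⁅b, a⁆ = ⁅a, b⁆⁻¹ := (commutatorElement_inv a b).symm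
    have hxa : ⁅x, a⁆ = ⁅a, b⁆ ^ m := by
      rw [hx, comm_mul_left h2, zp, zp, commutatorElement_self, one_zpow, one_mul, hba]
      rw [inv_zpow, ← zpow_neg, neg_neg]
    have hxb : ⁅x, b⁆ = ⁅a, b⁆ ^ n := by
      rw [hx, comm_mul_left h2, zp, zp, commutatorElement_self, one_zpow, mul_one]
    have key : ∀ g : G, x * g * x⁻¹ = α g := by
      intro g
      have hg : g ∈ Subgroup.closure ({a, b} : Set G) := by rw [hab]; trivial
      induction hg using Subgroup.closure_induction with
      | mem s hs =>
        rcases hs with rfl | rfl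
        · have e1 : x * s * x⁻¹ = ⁅x, s⁆ * s := by group
          have e2 : α s = s * (s⁻¹ * α s) := by group
          rw [e1, hxa, e2, ← hm]
          exact (Subgroup.mem_center_iff.mp (hcentral m) s).symm
        · have e1 : x * s * x⁻¹ = ⁅x, s⁆ * s := by group
          have e2 : α s = s * (s⁻¹ * α s) := by group
          rw [e1, hxb, e2, ← hn]
          exact (Subgroup.mem_center_iff.mp (hcentral n) s).symm
      | one => simp
      | mul u v hu hv ihu ihv =>
        have e : x * (u * v) * x⁻¹ = (x * u * x⁻¹) * (x * v * x⁻¹) := by group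
        rw [e, ihu, ihv, map_mul]
      | inv u hu ihu =>
        have e : x * u⁻¹ * x⁻¹ = (x * u * x⁻¹)⁻¹ := by group
        rw [e, ihu, map_inv]
    exact ⟨x, MulEquiv.ext fun g => by simpa [MulAut.conj_apply] using key g⟩
  apply le_antisymm
  · intro α hα
    obtain ⟨x, hxα⟩ := test α hα
    exact ⟨x, hxα⟩
  · rintro α ⟨x, rfl⟩
    intro g
    show g⁻¹ * (MulAut.conj x) g ∈ commutator G
    have h : g⁻¹ * (MulAut.conj x) g = ⁅g⁻¹, x⁆ := by
      rw [MulAut.conj_apply]; group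
    rw [h, commutator_def]
    exact Subgroup.commutator_mem_commutator (Subgroup.mem_top _) (Subgroup.mem_top _)
end

section
/- Let G be a torsion-free nilpotent group of class at most 2 (i.e., G' ⊆ Z(G)) that can be generated by 2 elements. Then IA(G) is isomorphic to Inn(G). -/
section Aux
variable {G : Type*} [Group G]

/-- If `c` is central and `u * v * u⁻¹ = c * v`, then conjugation by `u ^ j`
multiplies `v` by `c ^ j`. -/
lemma conj_zpow_aux (c u v : G) (hc : ∀ g : G, Commute c g)
    (h : u * v * u⁻¹ = c * v) (j : ℤ) : u ^ j * v * (u ^ j)⁻¹ = c ^ j * v := by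
  have h' : u⁻¹ * v * u = c⁻¹ * v := by
    have : v = c * (u⁻¹ * v * u) := by
      calc v = u⁻¹ * (u * v * u⁻¹) * u := by group
        _ = u⁻¹ * (c * v) * u := by rw [h]
        _ = c * (u⁻¹ * v * u) := by
            rw [show u⁻¹ * (c * v) * u = (u⁻¹ * c) * (v * u) by group,
              ← (hc u⁻¹).eq]; group
    calc u⁻¹ * v * u = c⁻¹ * (c * (u⁻¹ * v * u)) := by group
      _ = c⁻¹ * v := by rw [← this]
  induction j using Int.induction_on with
  | zero => simp
  | succ i ih =>
      have : u ^ ((i : ℤ) + 1) * v * (u ^ ((i : ℤ) + 1))⁻¹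
          = u * (u ^ (i : ℤ) * v * (u ^ (i : ℤ))⁻¹) * u⁻¹ := by
        rw [zpow_add_one]; group
      rw [this, ih, show u * (c ^ (i : ℤ) * v) * u⁻¹ = (u * c ^ (i:ℤ)) * (v * u⁻¹) by group,
        ← ((hc u).zpow_left (i : ℤ)).eq]
      calc c ^ (i:ℤ) * u * (v * u⁻¹) = c ^ (i:ℤ) * (u * v * u⁻¹) := by group
        _ = c ^ ((i:ℤ)+1) * v := by rw [h, zpow_add_one]; group
  | pred i ih =>
      have : u ^ (-(i : ℤ) - 1) * v * (u ^ (-(i : ℤ) - 1))⁻¹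
          = u⁻¹ * (u ^ (-(i : ℤ)) * v * (u ^ (-(i : ℤ)))⁻¹) * u := by
        rw [zpow_sub_one]; group
      rw [this, ih, show u⁻¹ * (c ^ (-(i:ℤ)) * v) * u = (u⁻¹ * c ^ (-(i:ℤ))) * (v * u) by group,
        ← ((hc u⁻¹).zpow_left (-(i : ℤ))).eq]
      calc c ^ (-(i:ℤ)) * u⁻¹ * (v * u) = c ^ (-(i:ℤ)) * (u⁻¹ * v * u) := by group
        _ = c ^ (-(i:ℤ)-1) * v := by rw [h', zpow_sub_one]; group

end Aux

open scoped commutatorElement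

/-- In a 2-generated torsion-free nilpotent group of class at most 2,
`IA(G) ≅ Inn(G)`. -/
theorem IA_iso_Inn_of_two_generated_torsionFree (G : Type*) [Group G]
    (htf : Monoid.IsTorsionFree G)
    (h2 : commutator G ≤ Subgroup.center G)
    (hgen : ∃ a b : G, Subgroup.closure {a, b} = ⊤) :
    Nonempty (IA G ≃* Inn G) := by
  obtain ⟨a, b, hab⟩ := hgen
  set k : G := ⁅a, b⁆ with hkdef
  -- all commutators are central
  have hmemc : ∀ x y : G, ⁅x, y⁆ ∈ commutator G := fun x y => by
    rw [commutator_def]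
    exact Subgroup.commutator_mem_commutator (Subgroup.mem_top x) (Subgroup.mem_top y)
  have hc : ∀ x y g : G, Commute ⁅x, y⁆ g := fun x y g =>
    ((Subgroup.mem_center_iff.mp (h2 (hmemc x y))) g).symm
  -- bilinearity of the commutator
  have hmul_l : ∀ x z y : G, ⁅x * z, y⁆ = ⁅x, y⁆ * ⁅z, y⁆ := by
    intro x z y
    calc ⁅x * z, y⁆ = x * ⁅z, y⁆ * (y * x⁻¹ * y⁻¹) := by
          rw [commutatorElement_def, commutatorElement_def]; group
      _ = x * (y * x⁻¹ * y⁻¹) * ⁅z, y⁆ := by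
          rw [mul_assoc, (hc z y (y * x⁻¹ * y⁻¹)).eq, ← mul_assoc]
      _ = ⁅x, y⁆ * ⁅z, y⁆ := by
          rw [commutatorElement_def, commutatorElement_def]; group
  have hinv_l : ∀ x y : G, ⁅x⁻¹, y⁆ = ⁅x, y⁆⁻¹ := by
    intro x y
    calc ⁅x⁻¹, y⁆ = x⁻¹ * ⁅y, x⁆ * x := by
          rw [commutatorElement_def, commutatorElement_def]; group
      _ = x⁻¹ * (x * ⁅y, x⁆) := by rw [mul_assoc, (hc y x x).eq]
      _ = ⁅y, x⁆ := by group
      _ = ⁅x, y⁆⁻¹ := (commutatorElement_inv x y).symm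
  have hmul_r : ∀ x y z : G, ⁅x, y * z⁆ = ⁅x, y⁆ * ⁅x, z⁆ := by
    intro x y z
    calc ⁅x, y * z⁆ = ⁅y * z, x⁆⁻¹ := (commutatorElement_inv (y * z) x).symm
      _ = (⁅y, x⁆ * ⁅z, x⁆)⁻¹ := by rw [hmul_l]
      _ = ⁅z, x⁆⁻¹ * ⁅y, x⁆⁻¹ := by rw [mul_inv_rev]
      _ = ⁅x, z⁆ * ⁅x, y⁆ := by rw [commutatorElement_inv, commutatorElement_inv]
      _ = ⁅x, y⁆ * ⁅x, z⁆ := (hc x z ⁅x, y⁆).eq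
  have hinv_r : ∀ x y : G, ⁅x, y⁻¹⁆ = ⁅x, y⁆⁻¹ := by
    intro x y
    calc ⁅x, y⁻¹⁆ = ⁅y⁻¹, x⁆⁻¹ := (commutatorElement_inv y⁻¹ x).symm
      _ = (⁅y, x⁆⁻¹)⁻¹ := by rw [hinv_l]
      _ = ⁅y, x⁆ := inv_inv _
      _ = ⁅x, y⁆⁻¹ := (commutatorElement_inv x y).symm
  -- the commutator subgroup lies in the cyclic group generated by k
  have hzp : commutator G ≤ Subgroup.zpowers k := by
    rw [commutator_def, Subgroup.commutator_le]
    intro x hxt y hyt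
    clear hxt hyt
    have hx : x ∈ Subgroup.closure ({a, b} : Set G) := hab ▸ Subgroup.mem_top x
    have hy : y ∈ Subgroup.closure ({a, b} : Set G) := hab ▸ Subgroup.mem_top y
    induction hx, hy using Subgroup.closure_induction₂ with
    | mem u v hu hv =>
        simp only [Set.mem_insert_iff, Set.mem_singleton_iff] at hu hv
        rcases hu with rfl | rfl <;> rcases hv with rfl | rfl
        · rw [commutatorElement_self]; exact one_mem _
        · rw [← hkdef]; exact Subgroup.mem_zpowers k
        · rw [← commutatorElement_inv, ← hkdef]
          exact inv_mem (Subgroup.mem_zpowers k)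
        · rw [commutatorElement_self]; exact one_mem _
    | one_left v hv => rw [commutatorElement_one_left]; exact one_mem _
    | one_right v hv => rw [commutatorElement_one_right]; exact one_mem _
    | mul_left u v w _ _ _ h1 h2 => rw [hmul_l]; exact mul_mem h1 h2
    | mul_right u v w _ _ _ h1 h2 => rw [hmul_r]; exact mul_mem h1 h2
    | inv_left u v _ _ h1 => rw [hinv_l]; exact inv_mem h1
    | inv_right u v _ _ h1 => rw [hinv_r]; exact inv_mem h1
  -- conjugation formulas
  have hck : ∀ g : G, Commute k g := hc a b
  have hba : b * a * b⁻¹ = k⁻¹ * a := by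
    rw [hkdef, commutatorElement_inv, commutatorElement_def]; group
  have hab' : a * b * a⁻¹ = k * b := by
    rw [hkdef, commutatorElement_def]; group
  have hconj_b : ∀ j : ℤ, b ^ j * a * (b ^ j)⁻¹ = k ^ (-j) * a := by
    intro j
    have h := conj_zpow_aux k⁻¹ b a (fun g => (hck g).inv_left) hba j
    rw [inv_zpow] at h
    rw [zpow_neg]
    exact h
  have hconj_a : ∀ j : ℤ, a ^ j * b * (a ^ j)⁻¹ = k ^ j * b :=
    conj_zpow_aux k a b hck hab'
  -- prove the subgroups are equal
  suffices h : IA G = Inn G by exact ⟨MulEquiv.subgroupCongr h⟩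
  apply le_antisymm
  · -- IA ≤ Inn
    intro α hα
    have hαa' : a⁻¹ * α a ∈ commutator G := hα a
    have hαb' : b⁻¹ * α b ∈ commutator G := hα b
    obtain ⟨m, hm⟩ := Subgroup.mem_zpowers_iff.mp (hzp hαa')
    obtain ⟨n, hn⟩ := Subgroup.mem_zpowers_iff.mp (hzp hαb')
    have hαa : α a = k ^ m * a := by
      rw [((hck a).zpow_left m).eq, hm]; group
    have hαb : α b = k ^ n * b := by
      rw [((hck b).zpow_left n).eq, hn]; group
    refine ⟨a ^ n * b ^ (-m), ?_⟩
    have ha1 : MulAut.conj (a ^ n * b ^ (-m)) a = k ^ m * a := by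
      show a ^ n * b ^ (-m) * a * (a ^ n * b ^ (-m))⁻¹ = k ^ m * a
      have e1 : a ^ n * b ^ (-m) * a * (a ^ n * b ^ (-m))⁻¹
          = a ^ n * (b ^ (-m) * a * (b ^ (-m))⁻¹) * (a ^ n)⁻¹ := by group
      rw [e1, hconj_b (-m), neg_neg,
        show a ^ n * (k ^ m * a) * (a ^ n)⁻¹ = (a ^ n * k ^ m) * (a * (a ^ n)⁻¹) by group,
        ← ((hck (a ^ n)).zpow_left m).eq]
      group
    have hb1 : MulAut.conj (a ^ n * b ^ (-m)) b = k ^ n * b := by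
      show a ^ n * b ^ (-m) * b * (a ^ n * b ^ (-m))⁻¹ = k ^ n * b
      have e1 : a ^ n * b ^ (-m) * b * (a ^ n * b ^ (-m))⁻¹
          = a ^ n * b * (a ^ n)⁻¹ := by group
      rw [e1, hconj_a n]
    have hhom : ((MulAut.conj (a ^ n * b ^ (-m)) : MulAut G) : G →* G) = (α : G →* G) := by
      refine MonoidHom.eq_of_eqOn_dense hab ?_
      intro g hg
      simp only [Set.mem_insert_iff, Set.mem_singleton_iff] at hg
      rcases hg with rfl | rfl
      · exact ha1.trans hαa.symm
      · exact hb1.trans hαb.symm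
    ext g
    exact DFunLike.congr_fun hhom g
  · -- Inn ≤ IA
    rintro α ⟨g, rfl⟩
    intro x
    have hx : x⁻¹ * (MulAut.conj g) x = ⁅x⁻¹, g⁆ := by
      rw [commutatorElement_def, MulAut.conj_apply]; group
    rw [hx]
    exact hmemc x⁻¹ g
end

section
/- Let G be a group such that the derived subgroup G' is finite and G/Z(G) can be generated by d elements. Then IA(G)* is finite and |IA(G)*| ≤ |G'|^d. -/
/-- If `G'` is finite and `G/Z(G)` can be generated by `d` elements, then `IA(G)*` is
finite of order at most `|G'| ^ d`. -/
theorem card_IAstar_le (G : Type*) [Group G] [Finite (commutator G)] (d : ℕ)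
    (hgen : ∃ S : Finset (G ⧸ Subgroup.center G), S.card ≤ d ∧
      Subgroup.closure (S : Set (G ⧸ Subgroup.center G)) = ⊤) :
    Finite (IAstar G) ∧ Nat.card (IAstar G) ≤ Nat.card (commutator G) ^ d := by

  obtain ⟨S, hScard, hSgen⟩ := hgen
  classical
  set r : G ⧸ Subgroup.center G → G := Quotient.out with hr
  have hrq : ∀ q : G ⧸ Subgroup.center G, (r q : G ⧸ Subgroup.center G) = q :=
    fun q => QuotientGroup.out_eq' q
  -- key injectivity lemma
  have key : ∀ α β : IAstar G,
      (∀ s ∈ S, (α : MulAut G) (r s) = (β : MulAut G) (r s)) → α = β := by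
    intro α β hab
    set γ : IAstar G := β⁻¹ * α with hγ
    have hγfix : ∀ s ∈ S, (γ : MulAut G) (r s) = r s := by
      intro s hs
      show ((β : MulAut G))⁻¹ ((α : MulAut G) (r s)) = r s
      rw [hab s hs]
      exact MulAut.inv_apply_self G (β : MulAut G) (r s)
    have hγcen : ∀ z ∈ Subgroup.center G, (γ : MulAut G) z = z := γ.2.2
    set H : Subgroup G :=
      MonoidHom.eqLocus (MulEquiv.toMonoidHom (γ : MulAut G)) (MonoidHom.id G) with hH
    have hZle : Subgroup.center G ≤ H := fun z hz => hγcen z hz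
    have hmap : H.map (QuotientGroup.mk' (Subgroup.center G)) = ⊤ := by
      rw [eq_top_iff, ← hSgen]
      rw [Subgroup.closure_le]
      intro s hs
      exact ⟨r s, hγfix s hs, hrq s⟩
    have hHtop : H = ⊤ := by
      have h1 := Subgroup.comap_map_eq (QuotientGroup.mk' (Subgroup.center G)) H
      rw [hmap, QuotientGroup.ker_mk'] at h1
      rw [Subgroup.comap_top, sup_eq_left.mpr hZle] at h1
      exact h1.symm
    have hγ1 : γ = 1 := by
      ext g
      have : g ∈ H := hHtop ▸ Subgroup.mem_top g
      exact this
    have : β⁻¹ * α = 1 := hγ1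
    calc α = β * (β⁻¹ * α) := by group
    _ = β := by rw [this, mul_one]
  -- the injection
  set f : IAstar G → (S → commutator G) :=
    fun α s => ⟨(r s.1)⁻¹ * (α : MulAut G) (r s.1), α.2.1 (r s.1)⟩ with hf
  have hfinj : Function.Injective f := by
    intro α β h
    apply key
    intro s hs
    have := congrFun h ⟨s, hs⟩
    have h2 : (r s)⁻¹ * (α : MulAut G) (r s) = (r s)⁻¹ * (β : MulAut G) (r s) :=
      congrArg Subtype.val this
    exact mul_left_cancel h2
  have hfin : Finite (IAstar G) := Finite.of_injective f hfinj
  refine ⟨hfin, ?_⟩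
  have hle := Nat.card_le_card_of_injective f hfinj
  have hcard : Nat.card (S → commutator G) = Nat.card (commutator G) ^ S.card := by
    rw [Nat.card_fun, Nat.card_eq_finsetCard]
  have hpos : 1 ≤ Nat.card (commutator G) := Nat.one_le_iff_ne_zero.mpr Nat.card_pos.ne'
  calc Nat.card (IAstar G) ≤ Nat.card (commutator G) ^ S.card := by rw [← hcard]; exact hle
  _ ≤ Nat.card (commutator G) ^ d := Nat.pow_le_pow_right hpos hScard
end

section
/- Let G be a group such that the derived subgroup G' is finite and G/Z(G) can be generated by d elements. Then G/Z(G) is finite and |G/Z(G)| ≤ |G'|^d. -/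
/-- (Niroomand) If `G'` is finite and `G/Z(G)` can be generated by `d` elements, then
`G/Z(G)` is finite of order at most `|G'| ^ d`. -/
theorem card_central_quotient_le (G : Type*) [Group G] [Finite (commutator G)] (d : ℕ)
    (hgen : ∃ S : Finset (G ⧸ Subgroup.center G), S.card ≤ d ∧
      Subgroup.closure (S : Set (G ⧸ Subgroup.center G)) = ⊤) :
    Finite (G ⧸ Subgroup.center G) ∧
      Nat.card (G ⧸ Subgroup.center G) ≤ Nat.card (commutator G) ^ d := by
  obtain ⟨S, hScard, hStop⟩ := hgen
  letI : Bracket G G := commutatorElement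
  have memcomm : ∀ x g : G, ⁅x, g⁆ ∈ commutator G := fun x g =>
    Subgroup.commutator_mem_commutator (Subgroup.mem_top x) (Subgroup.mem_top g)
  let F : (G ⧸ Subgroup.center G) → (S → commutator G) := fun q s =>
    ⟨⁅q.out, (s : G ⧸ Subgroup.center G).out⁆, memcomm _ _⟩
  have hFinj : Function.Injective F := by
    intro q₁ q₂ h
    set x := q₁.out with hx
    set y := q₂.out with hy
    have hc : ∀ s : S, ⁅x, (s : G ⧸ Subgroup.center G).out⁆
        = ⁅y, (s : G ⧸ Subgroup.center G).out⁆ := fun s => Subtype.ext_iff.mp (congrFun h s)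
    have hcent : ∀ s : S, Commute (y⁻¹ * x) (s : G ⧸ Subgroup.center G).out := by
      intro s
      have h1 := hc s
      set b := (s : G ⧸ Subgroup.center G).out
      simp only [commutatorElement_def] at h1
      have h2 : x * b * x⁻¹ = y * b * y⁻¹ := mul_right_cancel h1
      show (y⁻¹ * x) * b = b * (y⁻¹ * x)
      calc (y⁻¹ * x) * b = y⁻¹ * (x * b * x⁻¹) * x := by group
      _ = y⁻¹ * (y * b * y⁻¹) * x := by rw [h2]
      _ = b * (y⁻¹ * x) := by group
    set c := y⁻¹ * x with hcdef
    have hsub : Subgroup.closure (S : Set (G ⧸ Subgroup.center G)) ≤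
        Subgroup.map (QuotientGroup.mk' (Subgroup.center G)) (Subgroup.centralizer {c}) := by
      rw [Subgroup.closure_le]
      intro s hs
      refine Subgroup.mem_map.mpr ⟨(s : G ⧸ Subgroup.center G).out, ?_, ?_⟩
      · rw [Subgroup.mem_centralizer_iff]
        intro m hm
        rw [Set.mem_singleton_iff] at hm
        subst hm
        exact hcent ⟨s, hs⟩
      · simp [QuotientGroup.mk'_apply]
    rw [hStop, top_le_iff] at hsub
    have hcc : c ∈ Subgroup.center G := by
      rw [Subgroup.mem_center_iff]
      intro g
      have hmem : (QuotientGroup.mk' (Subgroup.center G)) g ∈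
          Subgroup.map (QuotientGroup.mk' (Subgroup.center G)) (Subgroup.centralizer {c}) := by
        rw [hsub]; trivial
      obtain ⟨hh, hhc, hhg⟩ := Subgroup.mem_map.mp hmem
      have hz : hh⁻¹ * g ∈ Subgroup.center G := by
        rw [← QuotientGroup.eq]
        simpa using hhg
      have hch : Commute c hh := (Subgroup.mem_centralizer_iff.mp hhc) c rfl
      have hcz : Commute c (hh⁻¹ * g) := (Subgroup.mem_center_iff.mp hz) c
      have := hch.mul_right hcz
      simpa using this.symm.eq
    have hyx : (QuotientGroup.mk y : G ⧸ Subgroup.center G) = QuotientGroup.mk x :=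
      (QuotientGroup.eq).mpr hcc
    calc q₁ = QuotientGroup.mk x := (QuotientGroup.out_eq' q₁).symm
    _ = QuotientGroup.mk y := hyx.symm
    _ = q₂ := QuotientGroup.out_eq' q₂
  have hfin : Finite (G ⧸ Subgroup.center G) := Finite.of_injective F hFinj
  refine ⟨hfin, ?_⟩
  have hpos : 1 ≤ Nat.card (commutator G) :=
    Nat.one_le_iff_ne_zero.mpr (Nat.card_ne_zero.mpr ⟨⟨⟨1, Subgroup.one_mem _⟩⟩, ‹_›⟩)
  calc Nat.card (G ⧸ Subgroup.center G) ≤ Nat.card (S → commutator G) :=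
        Nat.card_le_card_of_injective F hFinj
  _ = Nat.card (commutator G) ^ S.card := by
        simp [Nat.card_fun]
  _ ≤ Nat.card (commutator G) ^ d := Nat.pow_le_pow_right hpos hScard
end

section
/- Let G be a group such that G/Z(G) is generated by the cosets x_1Z(G), x_2Z(G), ..., x_dZ(G), and suppose the set [x_i, G] = { [x_i, g] : g ∈ G } is finite for each i with 1 ≤ i ≤ d. Then G/Z(G) is finite with |G/Z(G)| ≤ ∏_{i=1}^{d} |[x_i, G]|, and the derived subgroup G' is finite. -/
open scoped commutatorElement

/-- If `G/Z(G)` is generated by the cosets of `x 1, ..., x d` and each set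
`[x i, G] = {(x i)⁻¹ * g⁻¹ * (x i) * g : g ∈ G}` is finite, then `G/Z(G)` is finite with
`|G/Z(G)| ≤ ∏ i, |[x i, G]|`, and `G'` is finite. -/
theorem card_central_quotient_le_prod_card_commutator_sets
    (G : Type*) [Group G] (d : ℕ) (x : Fin d → G)
    (hgen : Subgroup.closure
      (Set.range fun i => ((x i : G) : G ⧸ Subgroup.center G)) = ⊤)
    (hfin : ∀ i : Fin d, {c : G | ∃ g : G, c = (x i)⁻¹ * g⁻¹ * x i * g}.Finite) :
    (Finite (G ⧸ Subgroup.center G) ∧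
      Nat.card (G ⧸ Subgroup.center G) ≤
        ∏ i : Fin d, Nat.card {c : G | ∃ g : G, c = (x i)⁻¹ * g⁻¹ * x i * g}) ∧
      Finite (commutator G) := by
  set Z := Subgroup.center G with hZ
  -- G is generated by `range x` together with the center
  have hH : (Subgroup.closure (Set.range x) ⊔ Z) = (⊤ : Subgroup G) := by
    set H := Subgroup.closure (Set.range x) ⊔ Z with hHdef
    have hker : (QuotientGroup.mk' Z).ker = Z := QuotientGroup.ker_mk' Z
    have hmap : Subgroup.map (QuotientGroup.mk' Z) H = ⊤ := by
      rw [eq_top_iff, ← hgen, Subgroup.closure_le]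
      rintro _ ⟨i, rfl⟩
      exact ⟨x i, Subgroup.mem_sup_left (Subgroup.subset_closure ⟨i, rfl⟩), rfl⟩
    have hc := Subgroup.comap_map_eq (QuotientGroup.mk' Z) H
    rw [hmap, Subgroup.comap_top, hker] at hc
    rw [hc, hHdef, sup_assoc, sup_idem]
  -- well-definedness of the commutator word on cosets
  have hwd : ∀ (y a b : G), a⁻¹ * b ∈ Z →
      y⁻¹ * a⁻¹ * y * a = y⁻¹ * b⁻¹ * y * b := by
    intro y a b hab
    have hc : ∀ g : G, g * (a⁻¹ * b) = (a⁻¹ * b) * g := fun g =>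
      Subgroup.mem_center_iff.mp hab g
    set z := a⁻¹ * b with hzdef
    have hb : b = a * z := by rw [hzdef]; group
    rw [hb]
    symm
    calc y⁻¹ * (a*z)⁻¹ * y * (a*z)
        = y⁻¹ * z⁻¹ * a⁻¹ * (y * (a * z)) := by group
      _ = y⁻¹ * z⁻¹ * a⁻¹ * (y * (z * a)) := by rw [hc a]
      _ = y⁻¹ * z⁻¹ * a⁻¹ * ((y * z) * a) := by group
      _ = y⁻¹ * z⁻¹ * a⁻¹ * ((z * y) * a) := by rw [hc y]
      _ = y⁻¹ * z⁻¹ * (a⁻¹ * z) * (y * a) := by group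
      _ = y⁻¹ * z⁻¹ * (z * a⁻¹) * (y * a) := by rw [hc a⁻¹]
      _ = y⁻¹ * a⁻¹ * y * a := by group
  -- the injective map from G/Z into the product of the commutator sets
  let f : G ⧸ Z → ∀ i : Fin d, {c : G | ∃ g : G, c = (x i)⁻¹ * g⁻¹ * x i * g} :=
    fun q => Quotient.liftOn' q
      (fun a i => (⟨(x i)⁻¹ * a⁻¹ * x i * a, ⟨a, rfl⟩⟩ :
        {c : G | ∃ g : G, c = (x i)⁻¹ * g⁻¹ * x i * g}))
      (fun a b hab => by
        funext i
        exact Subtype.ext (hwd (x i) a b (QuotientGroup.leftRel_apply.mp hab)))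
  have hf : Function.Injective f := by
    intro q1 q2 hq
    induction q1 using Quotient.inductionOn' with
    | h a =>
    induction q2 using Quotient.inductionOn' with
    | h b =>
    have hxi : ∀ i : Fin d, (x i)⁻¹ * a⁻¹ * x i * a = (x i)⁻¹ * b⁻¹ * x i * b :=
      fun i => congrArg Subtype.val (congrFun hq i)
    -- c := a * b⁻¹ commutes with every x i
    have hcx : ∀ i : Fin d, x i * (a * b⁻¹) = (a * b⁻¹) * x i := by
      intro i
      have h1 : a⁻¹ * x i * a = b⁻¹ * x i * b := by
        have := congrArg (fun t => x i * t) (hxi i)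
        simpa [mul_assoc] using this
      calc x i * (a * b⁻¹) = a * (a⁻¹ * x i * a) * b⁻¹ := by group
        _ = a * (b⁻¹ * x i * b) * b⁻¹ := by rw [h1]
        _ = (a * b⁻¹) * x i := by group
    have hcz : a * b⁻¹ ∈ Z := by
      have hK : (⊤ : Subgroup G) ≤ Subgroup.centralizer {a * b⁻¹} := by
        rw [← hH]
        refine sup_le ?_ ?_
        · rw [Subgroup.closure_le]
          rintro _ ⟨i, rfl⟩
          rw [SetLike.mem_coe, Subgroup.mem_centralizer_iff]
          rintro m hm
          rw [Set.mem_singleton_iff] at hm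
          subst hm
          exact (hcx i).symm
        · intro g hg
          rw [Subgroup.mem_centralizer_iff]
          rintro m hm
          rw [Set.mem_singleton_iff] at hm
          subst hm
          exact Subgroup.mem_center_iff.mp hg (a * b⁻¹)
      rw [hZ, Subgroup.mem_center_iff]
      intro g
      have := hK (Subgroup.mem_top g)
      rw [Subgroup.mem_centralizer_iff] at this
      exact (this (a * b⁻¹) rfl).symm
    -- conclude the cosets are equal
    have hmem : a⁻¹ * b ∈ Z := by
      have hinv : b * a⁻¹ ∈ Z := by
        have := Z.inv_mem hcz
        have he : (a * b⁻¹)⁻¹ = b * a⁻¹ := by group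
        rwa [he] at this
      have hcomm : ∀ g : G, g * (b * a⁻¹) = (b * a⁻¹) * g := fun g =>
        Subgroup.mem_center_iff.mp hinv g
      have h3 : a⁻¹ * b = a⁻¹ * (b * a⁻¹) * a := by group
      rw [h3, hcomm a⁻¹]
      have h4 : (b * a⁻¹) * a⁻¹ * a = b * a⁻¹ := by group
      rw [h4]
      exact hinv
    exact Quotient.sound' (QuotientGroup.leftRel_apply.mpr hmem)
  haveI : ∀ i : Fin d, Finite {c : G | ∃ g : G, c = (x i)⁻¹ * g⁻¹ * x i * g} :=
    fun i => (hfin i).to_subtype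
  haveI hfinQ : Finite (G ⧸ Z) := Finite.of_injective f hf
  refine ⟨⟨hfinQ, ?_⟩, ?_⟩
  · calc Nat.card (G ⧸ Z) ≤
        Nat.card (∀ i : Fin d, {c : G | ∃ g : G, c = (x i)⁻¹ * g⁻¹ * x i * g}) :=
          Nat.card_le_card_of_injective f hf
      _ = ∏ i : Fin d, Nat.card {c : G | ∃ g : G, c = (x i)⁻¹ * g⁻¹ * x i * g} :=
          Nat.card_pi
  · -- commutators depend only on cosets mod the center, so commutatorSet is finite
    have hcd : ∀ a b z w : G, z ∈ Z → w ∈ Z → ⁅a * z, b * w⁆ = ⁅a, b⁆ := by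
      intro a b z w hz hw
      have cz : ∀ g : G, z * g = g * z := fun g =>
        (Subgroup.mem_center_iff.mp hz g).symm
      have cw : ∀ g : G, w * g = g * w := fun g =>
        (Subgroup.mem_center_iff.mp hw g).symm
      have hconj : ∀ X : G, (a * z) * X * (a * z)⁻¹ = a * X * a⁻¹ := by
        intro X
        calc (a * z) * X * (a * z)⁻¹ = a * (z * X) * z⁻¹ * a⁻¹ := by group
          _ = a * (X * z) * z⁻¹ * a⁻¹ := by rw [cz X]
          _ = a * X * a⁻¹ := by group
      calc ⁅a * z, b * w⁆ = (a * z) * (b * w) * (a * z)⁻¹ * (b * w)⁻¹ :=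
            commutatorElement_def _ _
        _ = (a * (b * w) * a⁻¹) * (b * w)⁻¹ := by rw [hconj (b * w)]
        _ = a * b * (w * a⁻¹) * (w⁻¹ * b⁻¹) := by group
        _ = a * b * (a⁻¹ * w) * (w⁻¹ * b⁻¹) := by rw [cw a⁻¹]
        _ = ⁅a, b⁆ := by rw [commutatorElement_def]; group
    have hsub : commutatorSet G ⊆ Set.range
        (fun p : (G ⧸ Z) × (G ⧸ Z) => ⁅Quotient.out p.1, Quotient.out p.2⁆) := by
      rintro _ ⟨a, b, rfl⟩
      refine ⟨((a : G ⧸ Z), (b : G ⧸ Z)), ?_⟩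
      have ha : a⁻¹ * Quotient.out ((a : G ⧸ Z)) ∈ Z :=
        QuotientGroup.eq.mp (QuotientGroup.out_eq' ((a : G ⧸ Z))).symm
      have hb : b⁻¹ * Quotient.out ((b : G ⧸ Z)) ∈ Z :=
        QuotientGroup.eq.mp (QuotientGroup.out_eq' ((b : G ⧸ Z))).symm
      have ea : Quotient.out ((a : G ⧸ Z)) = a * (a⁻¹ * Quotient.out ((a : G ⧸ Z))) := by
        group
      have eb : Quotient.out ((b : G ⧸ Z)) = b * (b⁻¹ * Quotient.out ((b : G ⧸ Z))) := by
        group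
      show ⁅Quotient.out ((a : G ⧸ Z)), Quotient.out ((b : G ⧸ Z))⁆ = ⁅a, b⁆
      rw [ea, eb]
      exact hcd a b _ _ ha hb
    haveI : Finite (commutatorSet G) :=
      ((Set.finite_range _).subset hsub).to_subtype
    infer_instance
end

section
/- Let G be a group such that the derived subgroup G' is finite, G/Z(G) is finite and can be generated by d elements, and equality |G/Z(G)| = |G'|^d holds. Then every element of G' is a commutator, i.e., G' = K(G) where K(G) = { [x, y] : x, y ∈ G }. -/
open scoped commutatorElement

/-- If `G'` is finite, `G/Z(G)` is finite with minimal number of generators `d`, and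
`|G/Z(G)| = |G'| ^ d`, then every element of `G'` is a commutator, i.e. `G' = K(G)`. -/
theorem commutator_eq_commutatorSet_of_card_eq (G : Type*) [Group G]
    [Finite (commutator G)] [Finite (G ⧸ Subgroup.center G)]
    (heq : Nat.card (G ⧸ Subgroup.center G) =
      Nat.card (commutator G) ^ Group.rank (G ⧸ Subgroup.center G)) :
    (commutator G : Set G) = {c : G | ∃ x y : G, c = x⁻¹ * y⁻¹ * x * y} := by
  classical
  obtain ⟨S, hScard, hSclosure⟩ := Group.rank_spec (G ⧸ Subgroup.center G)
  have hmem : ∀ x y : G, ⁅x, y⁆ ∈ commutator G := fun x y => by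
    rw [commutator_def]
    exact Subgroup.commutator_mem_commutator (Subgroup.mem_top _) (Subgroup.mem_top _)
  set f : (G ⧸ Subgroup.center G) → (S → commutator G) :=
    fun q s => ⟨⁅q.out, (s : G ⧸ Subgroup.center G).out⁆, hmem _ _⟩ with hf
  have hinj : Function.Injective f := by
    intro q₁ q₂ h
    set x := q₁.out with hx
    set y := q₂.out with hy
    have hcent : y⁻¹ * x ∈ Subgroup.center G := by
      have hcomm : ∀ s : S, (y⁻¹ * x) * (s : G ⧸ Subgroup.center G).out =
          (s : G ⧸ Subgroup.center G).out * (y⁻¹ * x) := by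
        intro s
        set g := (s : G ⧸ Subgroup.center G).out with hg
        have h2 : x * g * x⁻¹ * g⁻¹ = y * g * y⁻¹ * g⁻¹ :=
          congrArg Subtype.val (congrFun h s)
        have h3 : x * g * x⁻¹ = y * g * y⁻¹ := mul_right_cancel h2
        calc (y⁻¹ * x) * g = y⁻¹ * (x * g * x⁻¹) * x := by group
          _ = y⁻¹ * (y * g * y⁻¹) * x := by rw [h3]
          _ = g * (y⁻¹ * x) := by group
      -- the centralizer of y⁻¹ * x is all of G
      set H := Subgroup.centralizer {y⁻¹ * x} with hH
      have hZ : Subgroup.center G ≤ H := by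
        intro z hz
        rw [Subgroup.mem_centralizer_iff]
        rintro h' rfl
        exact Subgroup.mem_center_iff.mp hz _
      have hmap : Subgroup.map (QuotientGroup.mk' (Subgroup.center G)) H = ⊤ := by
        rw [eq_top_iff, ← hSclosure, Subgroup.closure_le]
        intro q hq
        refine Subgroup.mem_map.mpr ⟨(⟨q, hq⟩ : S).1.out, ?_, Quotient.out_eq' _⟩
        rw [hH, Subgroup.mem_centralizer_iff]
        rintro h' rfl
        exact hcomm ⟨q, hq⟩
      have hHtop : H = ⊤ := by
        have := congrArg (Subgroup.comap (QuotientGroup.mk' (Subgroup.center G))) hmap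
        rwa [Subgroup.comap_map_eq, QuotientGroup.ker_mk', sup_of_le_left hZ,
          Subgroup.comap_top] at this
      rw [Subgroup.mem_center_iff]
      intro g
      have : g ∈ H := hHtop ▸ Subgroup.mem_top g
      exact (Subgroup.mem_centralizer_iff.mp this _ rfl).symm
    have : (QuotientGroup.mk y : G ⧸ Subgroup.center G) = QuotientGroup.mk x :=
      QuotientGroup.eq.mpr hcent
    rw [hx, hy] at this
    rw [← Quotient.out_eq' q₁, ← Quotient.out_eq' q₂]
    exact this.symm
  have hsurj : Function.Surjective f := by
    have hcard : Nat.card (G ⧸ Subgroup.center G) = Nat.card (S → commutator G) := by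
      rw [Nat.card_fun, heq, ← hScard]
      simp
    exact ((Nat.bijective_iff_injective_and_card f).mpr ⟨hinj, hcard⟩).2
  ext c
  simp only [SetLike.mem_coe, Set.mem_setOf_eq]
  constructor
  · intro hc
    rcases S.eq_empty_or_nonempty with hS | ⟨s₀, hs₀⟩
    · -- G is abelian, c = 1
      rw [hS, Finset.coe_empty, Subgroup.closure_empty] at hSclosure
      have habel : ∀ g : G, g ∈ Subgroup.center G := by
        intro g
        have : (QuotientGroup.mk g : G ⧸ Subgroup.center G) = 1 := by
          have := Subgroup.mem_top (QuotientGroup.mk g : G ⧸ Subgroup.center G)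
          rw [← hSclosure] at this
          simpa using this
        exact (QuotientGroup.eq_one_iff g).mp this
      have hc1 : c = 1 := by
        have : commutator G ≤ ⊥ := by
          rw [commutator_def, Subgroup.commutator_le]
          intro g₁ _ g₂ _
          simp only [Subgroup.mem_bot, commutatorElement_eq_one_iff_commute]
          exact Subgroup.mem_center_iff.mp (habel g₂) g₁
        simpa using this hc
      exact ⟨1, 1, by simp [hc1]⟩
    · obtain ⟨q, hq⟩ := hsurj (fun s => if s = ⟨s₀, hs₀⟩ then ⟨c, hc⟩ else 1)
      have := congrFun hq ⟨s₀, hs₀⟩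
      simp only [if_pos rfl] at this
      have h2 : ⁅q.out, s₀.out⁆ = c := congrArg Subtype.val this
      refine ⟨q.out⁻¹, s₀.out⁻¹, ?_⟩
      rw [← h2]
      group
  · rintro ⟨x, y, rfl⟩
    have : x⁻¹ * y⁻¹ * x * y = ⁅x⁻¹, y⁻¹⁆ := by group
    rw [this]
    exact hmem _ _
end

section
/- Let G be a finite non-abelian p-group of coclass 2 (i.e., |G| = p^n and the nilpotency class of G is n − 2) for which |G/Z(G)| = |G'|^{d(G/Z(G))}, where d(G/Z(G)) is the minimal number of generators of G/Z(G). Then |G| = p^4 or |G| = p^5. -/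
open scoped commutatorElement

private lemma lcs_const_of_succ_eq {G : Type*} [Group G] (i : ℕ)
    (h : Subgroup.lowerCentralSeries (⊤ : Subgroup G) (i + 1) = Subgroup.lowerCentralSeries (⊤ : Subgroup G) i) :
    ∀ j, Subgroup.lowerCentralSeries (⊤ : Subgroup G) (i + j) = Subgroup.lowerCentralSeries (⊤ : Subgroup G) i
  | 0 => rfl
  | j + 1 => by
    rw [show i + (j + 1) = (i + j) + 1 from rfl, lowerCentralSeries_succ,
      lcs_const_of_succ_eq i h j, ← lowerCentralSeries_succ, h]

private lemma lcs_strict {G : Type*} [Group G] [Group.IsNilpotent G] {i : ℕ}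
    (hi : i < Group.nilpotencyClass G) :
    Subgroup.lowerCentralSeries (⊤ : Subgroup G) (i + 1) < Subgroup.lowerCentralSeries (⊤ : Subgroup G) i := by
  rcases lt_or_eq_of_le (lowerCentralSeries_antitone (⊤ : Subgroup G) (Nat.le_succ i)) with h | h
  · exact h
  · exfalso
    have h1 := lcs_const_of_succ_eq i h (Group.nilpotencyClass G)
    have hbot : Subgroup.lowerCentralSeries (⊤ : Subgroup G) (i + Group.nilpotencyClass G) = ⊥ :=
      lowerCentralSeries_eq_bot_iff_nilpotencyClass_le.mpr (Nat.le_add_left _ _)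
    have h2 : Subgroup.lowerCentralSeries (⊤ : Subgroup G) i = ⊥ := by rw [← h1, hbot]
    exact absurd (lowerCentralSeries_eq_bot_iff_nilpotencyClass_le.mp h2) (by omega)

/-- A finite non-abelian `p`-group of coclass 2 satisfying
`|G/Z(G)| = |G'| ^ d(G/Z(G))` has order `p ^ 4` or `p ^ 5`. -/
theorem card_eq_of_coclass_two (p : ℕ) (hp : p.Prime) (G : Type*) [Group G] [Finite G]
    [Group.IsNilpotent G] (n : ℕ) (hcard : Nat.card G = p ^ n)
    (hclass : Group.nilpotencyClass G = n - 2)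
    (hnab : ∃ a b : G, a * b ≠ b * a)
    (heq : Nat.card (G ⧸ Subgroup.center G) =
      Nat.card (commutator G) ^ Group.rank (G ⧸ Subgroup.center G)) :
    Nat.card G = p ^ 4 ∨ Nat.card G = p ^ 5 := by
  obtain ⟨a, b, hab⟩ := hnab
  have hnt : Nontrivial G := by
    rcases subsingleton_or_nontrivial G with h | h
    · exact absurd (Subsingleton.elim (a * b) (b * a)) hab
    · exact h
  have hpG : IsPGroup p G := IsPGroup.of_card hcard
  set c := Group.nilpotencyClass G with hc
  -- non-abelian implies nilpotency class at least 2
  have hc2 : 2 ≤ c := by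
    by_contra h
    push_neg at h
    have hbot : Subgroup.lowerCentralSeries (⊤ : Subgroup G) 1 = ⊥ :=
      lowerCentralSeries_eq_bot_iff_nilpotencyClass_le.mpr (by omega)
    have hmem : ⁅a, b⁆ ∈ Subgroup.lowerCentralSeries (⊤ : Subgroup G) 1 := by
      rw [lowerCentralSeries_one]
      exact Subgroup.commutator_mem_commutator (Subgroup.mem_top a) (Subgroup.mem_top b)
    rw [hbot, Subgroup.mem_bot] at hmem
    exact hab (commutatorElement_eq_one_iff_mul_comm.mp hmem)
  have hn4 : 4 ≤ n := by omega
  -- every section of G has p-power order; extract exponents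
  have hpow : ∀ H : Subgroup G, ∃ m, m ≤ n ∧ Nat.card H = p ^ m := fun H => by
    obtain ⟨m, hm, h⟩ := (Nat.dvd_prime_pow hp).mp
      (hcard ▸ Subgroup.card_subgroup_dvd_card H)
    exact ⟨m, hm, h⟩
  -- the lower central series descends strictly, so `p ^ (c - 1) ∣ |G'|`
  have key : ∀ m, m ≤ c → p ^ m ∣ Nat.card (Subgroup.lowerCentralSeries (⊤ : Subgroup G) (c - m)) := by
    intro m
    induction m with
    | zero => intro _; exact one_dvd _
    | succ m ih =>
      intro hm
      set i := c - (m + 1) with hi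
      have hi1 : c - m = i + 1 := by omega
      have hstrict : Subgroup.lowerCentralSeries (⊤ : Subgroup G) (i + 1) < Subgroup.lowerCentralSeries (⊤ : Subgroup G) i :=
        lcs_strict (by omega)
      have hdvd1 : p ^ m ∣ Nat.card (Subgroup.lowerCentralSeries (⊤ : Subgroup G) (i + 1)) := by
        rw [← hi1]; exact ih (by omega)
      obtain ⟨u, _, hu⟩ := hpow (Subgroup.lowerCentralSeries (⊤ : Subgroup G) (i + 1))
      obtain ⟨v, _, hv⟩ := hpow (Subgroup.lowerCentralSeries (⊤ : Subgroup G) i)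
      have hdvd2 : Nat.card (Subgroup.lowerCentralSeries (⊤ : Subgroup G) (i + 1)) ∣
          Nat.card (Subgroup.lowerCentralSeries (⊤ : Subgroup G) i) :=
        Subgroup.card_dvd_of_le hstrict.le
      have hne : Nat.card (Subgroup.lowerCentralSeries (⊤ : Subgroup G) (i + 1)) ≠
          Nat.card (Subgroup.lowerCentralSeries (⊤ : Subgroup G) i) := fun hcontra =>
        hstrict.ne (Subgroup.eq_of_le_of_card_ge hstrict.le hcontra.ge)
      rw [hu] at hdvd1 hdvd2 hne
      rw [hv] at hdvd2 hne
      have hmu : m ≤ u := (Nat.pow_dvd_pow_iff_le_right hp.one_lt).mp hdvd1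
      have huv : u ≤ v := (Nat.pow_dvd_pow_iff_le_right hp.one_lt).mp hdvd2
      have huv' : u ≠ v := fun h => hne (by rw [h])
      rw [hv]
      exact pow_dvd_pow p (by omega)
  -- |G'| = p ^ k with k ≥ c - 1
  obtain ⟨k, _, hk⟩ := hpow (commutator G)
  have hkc : c - 1 ≤ k := by
    have h1 : c - (c - 1) = 1 := by omega
    have := key (c - 1) (by omega)
    rw [h1, lowerCentralSeries_one, hk] at this
    exact (Nat.pow_dvd_pow_iff_le_right hp.one_lt).mp this
  -- |Z(G)| = p ^ z with z ≥ 1, |G/Z(G)| = p ^ w with n = w + z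
  obtain ⟨z, _, hz⟩ := hpow (Subgroup.center G)
  obtain ⟨w, _, hw⟩ := (Nat.dvd_prime_pow hp).mp
    (hcard ▸ Subgroup.card_quotient_dvd_card (Subgroup.center G))
  have hz1 : 1 ≤ z := by
    by_contra h
    have hz0 : z = 0 := by omega
    haveI : Fact p.Prime := ⟨hp⟩
    haveI := hpG.center_nontrivial
    have h1 := Finite.one_lt_card_iff_nontrivial.mpr (inferInstance : Nontrivial (Subgroup.center G))
    rw [hz, hz0, pow_zero] at h1
    omega
  have hnwz : n = w + z := by
    have h1 : Nat.card G = Nat.card (G ⧸ Subgroup.center G) * Nat.card (Subgroup.center G) :=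
      Subgroup.card_eq_card_quotient_mul_card_subgroup _
    rw [hcard, hw, hz, ← pow_add] at h1
    exact Nat.pow_right_injective hp.two_le h1
  -- the rank of G/Z(G) is at least 2
  set d := Group.rank (G ⧸ Subgroup.center G) with hd
  have hd2 : 2 ≤ d := by
    by_contra h
    push_neg at h
    obtain ⟨S, hS1, hS2⟩ := Group.rank_spec (G ⧸ Subgroup.center G)
    have hS : S.card ≤ 1 := by omega
    obtain ⟨g, hg⟩ := Finset.card_le_one_iff_subset_singleton.mp hS
    have hcyc : IsCyclic (G ⧸ Subgroup.center G) := by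
      refine ⟨⟨g, fun x => ?_⟩⟩
      have hle : Subgroup.closure (S : Set (G ⧸ Subgroup.center G)) ≤ Subgroup.zpowers g := by
        rw [Subgroup.zpowers_eq_closure]
        exact Subgroup.closure_mono (by exact_mod_cast hg)
      rw [hS2] at hle
      exact hle (Subgroup.mem_top x)
    exact hab (commutative_of_cyclic_center_quotient (QuotientGroup.mk' (Subgroup.center G))
      (le_of_eq (QuotientGroup.ker_mk' _)) a b)
  -- exponent bookkeeping from the hypothesis `heq`
  have hwkd : w = k * d := by
    rw [hw, hk, ← pow_mul] at heq
    exact Nat.pow_right_injective hp.two_le heq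
  have h2k : 2 * k ≤ w := by
    rw [hwkd, mul_comm]
    exact Nat.mul_le_mul_left k hd2
  have hk3 : n - 3 ≤ k := by omega
  have : n = 4 ∨ n = 5 := by omega
  rcases this with h | h
  · left; rw [hcard, h]
  · right; rw [hcard, h]
end
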